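/- arXiv:2209.14181 — 3 statements merged into one kernel-verified Lean document; each statement's English description precedes it below -/
import Mathlib

section
/- Suppose a sequence of linear estimators θ̂_n = Σ_i Y_i ω_i(d) with sup_n Σ_i √Var(ω_i(d)) < ∞, paired with a sequence of cluster-randomized designs with parameter p, satisfies θ̂_n − θ_n = O_p(a_n) for every choice of potential outcomes satisfying geometric interference (constants K₁, η), bounded outcomes |Y_i(d)| ≤ Ȳ, and linearity, where a_n → 0. Then for every ε ∈ (0, 1/η) and every δ > 0, (1/n)·Σ_{i=1}^n 1{ φ_n(i, a_n^{−1/η+ε}) ≥ a_n^{−δ} } → 0 as n → ∞. -/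
open MeasureTheory ProbabilityTheory Filter
open scoped ENNReal NNReal BigOperators Classical Topology

noncomputable section

namespace AGEPaper

variable {n C : ℕ}

/-- The `s`-neighborhood of unit `i`: all units within distance `s`. -/
def nbhd (ρ : Fin n → Fin n → ℝ) (i : Fin n) (s : ℝ) : Finset (Fin n) :=
  Finset.univ.filter fun j => ρ i j ≤ s

/-- A valid distance function: `ρ i i = 0` and `ρ i j > 0` for `i ≠ j`. -/
def DistOK (ρ : Fin n → Fin n → ℝ) : Prop :=
  (∀ i, ρ i i = 0) ∧ ∀ i j : Fin n, i ≠ j → 0 < ρ i j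

/-- The largest (dis)saturated neighborhood radius of unit `i` under treatment `d`. -/
def stilde (ρ : Fin n → Fin n → ℝ) (d : Fin n → Bool) (i : Fin n) : ℝ :=
  sSup {s : ℝ | 0 < s ∧
    ((∀ j ∈ nbhd ρ i s, d j = true) ∨ (∀ j ∈ nbhd ρ i s, d j = false))}

/-- The average global effect. -/
def age (Y : Fin n → (Fin n → Bool) → ℝ) : ℝ :=
  (∑ i, (Y i (fun _ => true) - Y i (fun _ => false))) / n

/-- Geometric interference with constants `K₁, η`. -/
def GeomInterf (ρ : Fin n → Fin n → ℝ) (K₁ η : ℝ)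
    (Y : Fin n → (Fin n → Bool) → ℝ) : Prop :=
  ∀ (i : Fin n) (d : Fin n → Bool),
    |Y i d - (if d i then Y i (fun _ => true) else Y i (fun _ => false))| ≤
      K₁ * stilde ρ d i ^ (-η)

/-- Linearity of potential outcomes: the effect of disjoint treatment vectors is additive. -/
def LinearPO (Y : Fin n → (Fin n → Bool) → ℝ) : Prop :=
  ∀ d d' : Fin n → Bool, (∀ i, ¬(d i = true ∧ d' i = true)) →
    ∀ i, Y i (fun j => d j || d' j) - Y i (fun _ => false) =
      Y i d + Y i d' - 2 * Y i (fun _ => false)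

/-- Packing assumption with constant `K₃`: any `s`-packing has at most `K₃ n / s` members. -/
def Packing (ρ : Fin n → Fin n → ℝ) (K₃ : ℝ) : Prop :=
  ∀ s : ℝ, 0 < s → ∀ Q : Finset (Fin n),
    (∀ i : Fin n, (Q.filter fun j => ρ i j ≤ s).card ≤ 1) →
    (Q.card : ℝ) ≤ K₃ * n / s

/-- Bounded density with constant `K₆`. -/
def BoundedDensity (ρ : Fin n → Fin n → ℝ) (K₆ : ℝ) : Prop :=
  ∀ s : ℝ, 0 < s → ∀ i : Fin n, ((nbhd ρ i s).card : ℝ) ≤ K₆ * s + 1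

/-- `J` is an `s`-cover of the finite set `A`. -/
def CoversWith (ρ : Fin n → Fin n → ℝ) (s : ℝ) (J A : Finset (Fin n)) : Prop :=
  ∀ a ∈ A, ∃ j ∈ J, a ∈ nbhd ρ j s

/-- `𝒰(A,s)`: union of the `s`-neighborhoods of members of `A`. -/
def setU (ρ : Fin n → Fin n → ℝ) (A : Finset (Fin n)) (s : ℝ) : Finset (Fin n) :=
  A.biUnion fun i => nbhd ρ i s

/-- `𝒱(A,s)`: units whose `s`-neighborhood intersects `A`. -/
def setV (ρ : Fin n → Fin n → ℝ) (A : Finset (Fin n)) (s : ℝ) : Finset (Fin n) :=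
  Finset.univ.filter fun j => ∃ a ∈ A, a ∈ nbhd ρ j s

/-- Bounded covering numbers with function `lam`. -/
def BoundedCovering (ρ : Fin n → Fin n → ℝ) (lam : ℝ → ℝ) : Prop :=
  ∀ α s : ℝ, 0 < α → 0 < s → ∀ i : Fin n,
    (∃ J : Finset (Fin n), (J.card : ℝ) ≤ lam α ∧
      CoversWith ρ s J (setU ρ (nbhd ρ i s) (α * s))) ∧
    (∃ J : Finset (Fin n), (J.card : ℝ) ≤ lam α ∧
      CoversWith ρ s J (setV ρ (nbhd ρ i (α * s)) (α * s)))

/-- `U` is a `g`-cover of the population. -/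
def IsCover (ρ : Fin n → Fin n → ℝ) (g : ℝ) (U : Finset (Fin n)) : Prop :=
  ∀ i : Fin n, ∃ u ∈ U, i ∈ nbhd ρ u g

/-- `U` is a minimal `g`-cover of the population. -/
def IsMinimalCover (ρ : Fin n → Fin n → ℝ) (g : ℝ) (U : Finset (Fin n)) : Prop :=
  IsCover ρ g U ∧ ∀ V : Finset (Fin n), IsCover ρ g V → U.card ≤ V.card

/-- The cluster assignment `cl` arises from the Scaling Clusters design with radius `g`:
clusters are neighborhoods of an ordered minimal `g`-cover, minus previously assigned units. -/
def IsScalingClusters (ρ : Fin n → Fin n → ℝ) (g : ℝ) (cl : Fin n → Fin C) : Prop :=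
  ∃ u : Fin C → Fin n, Function.Injective u ∧
    IsMinimalCover ρ g (Finset.image u Finset.univ) ∧
    ∀ i : Fin n, i ∈ nbhd ρ (u (cl i)) g ∧ ∀ k : Fin C, k < cl i → i ∉ nbhd ρ (u k) g

/-- The Bernoulli(p) measure on `Bool` (for `0 ≤ p ≤ 1`). -/
def bern (p : ℝ) : Measure Bool :=
  (PMF.bernoulli (min (Real.toNNReal p) 1) (min_le_right _ _)).toMeasure

instance (p : ℝ) : IsProbabilityMeasure (bern p) :=
  PMF.toMeasure.isProbabilityMeasure _

/-- The design measure: i.i.d. Bernoulli(p) cluster-level treatments. -/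
def designMeasure (C : ℕ) (p : ℝ) : Measure (Fin C → Bool) :=
  Measure.pi fun _ => bern p

instance (C : ℕ) (p : ℝ) : IsProbabilityMeasure (designMeasure C p) := by
  unfold designMeasure; infer_instance

/-- Unit-level treatments induced by cluster-level treatments. -/
def dvec (cl : Fin n → Fin C) (x : Fin C → Bool) : Fin n → Bool := fun i => x (cl i)

/-- `φ_n(i,s)`: number of clusters intersecting the `s`-neighborhood of `i`. -/
def phi (ρ : Fin n → Fin n → ℝ) (cl : Fin n → Fin C) (i : Fin n) (s : ℝ) : ℕ :=
  (Finset.univ.filter fun c : Fin C => ∃ j ∈ nbhd ρ i s, cl j = c).card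

/-- `φ_n(s)`: maximum of `φ_n(i,s)` over the population. -/
def phiMax (ρ : Fin n → Fin n → ℝ) (cl : Fin n → Fin C) (s : ℝ) : ℕ :=
  Finset.univ.sup fun i : Fin n => phi ρ cl i s

/-- `γ_n(c,s)`: number of units whose `s`-neighborhood intersects cluster `c`. -/
def gam (ρ : Fin n → Fin n → ℝ) (cl : Fin n → Fin C) (c : Fin C) (s : ℝ) : ℕ :=
  (Finset.univ.filter fun i : Fin n => ∃ j ∈ nbhd ρ i s, cl j = c).card

/-- All members of the `κ`-neighborhood of `i` have treatment status `t`. -/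
def allTreat (ρ : Fin n → Fin n → ℝ) (cl : Fin n → Fin C) (κ : ℝ) (i : Fin n)
    (t : Bool) (x : Fin C → Bool) : Prop :=
  ∀ j ∈ nbhd ρ i κ, x (cl j) = t

/-- Indicator `T_{it}` that the `κ`-neighborhood of `i` is fully (dis)saturated. -/
def Tind (ρ : Fin n → Fin n → ℝ) (cl : Fin n → Fin C) (κ : ℝ) (i : Fin n)
    (t : Bool) (x : Fin C → Bool) : ℝ :=
  if allTreat ρ cl κ i t x then 1 else 0

/-- `P(T_{it} = 1)` under the design. -/
def probT (ρ : Fin n → Fin n → ℝ) (cl : Fin n → Fin C) (p κ : ℝ) (i : Fin n)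
    (t : Bool) : ℝ :=
  (designMeasure C p {x | allTreat ρ cl κ i t x}).toReal

/-- The Horvitz–Thompson estimator. -/
def htEst (ρ : Fin n → Fin n → ℝ) (cl : Fin n → Fin C) (p κ : ℝ)
    (Y : Fin n → (Fin n → Bool) → ℝ) (x : Fin C → Bool) : ℝ :=
  (∑ i, Y i (dvec cl x) * (Tind ρ cl κ i true x / probT ρ cl p κ i true
      - Tind ρ cl κ i false x / probT ρ cl p κ i false)) / n

/-- The Hajek estimator (ratios with zero denominators are `0`). -/
def hajekEst (ρ : Fin n → Fin n → ℝ) (cl : Fin n → Fin C) (p κ : ℝ)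
    (Y : Fin n → (Fin n → Bool) → ℝ) (x : Fin C → Bool) : ℝ :=
  (∑ i, Y i (dvec cl x) * Tind ρ cl κ i true x / probT ρ cl p κ i true) /
      (∑ k, Tind ρ cl κ k true x / probT ρ cl p κ k true)
    - (∑ i, Y i (dvec cl x) * Tind ρ cl κ i false x / probT ρ cl p κ i false) /
      (∑ k, Tind ρ cl κ k false x / probT ρ cl p κ k false)

/-- The Horvitz–Thompson estimator with explicit power denominators. -/
def htEstP (ρ : Fin n → Fin n → ℝ) (cl : Fin n → Fin C) (p κ : ℝ)
    (Y : Fin n → (Fin n → Bool) → ℝ) (x : Fin C → Bool) : ℝ :=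
  (∑ i, Y i (dvec cl x) * (Tind ρ cl κ i true x / p ^ phi ρ cl i κ
      - Tind ρ cl κ i false x / (1 - p) ^ phi ρ cl i κ)) / n

/-- The oracle estimator `θ̃_{n,κ}`. -/
def oracle (ρ : Fin n → Fin n → ℝ) (cl : Fin n → Fin C) (p κ : ℝ)
    (Y : Fin n → (Fin n → Bool) → ℝ) (x : Fin C → Bool) : ℝ :=
  (∑ i, (Y i (fun _ => true) * Tind ρ cl κ i true x / p ^ phi ρ cl i κ
      - Y i (fun _ => false) * Tind ρ cl κ i false x / (1 - p) ^ phi ρ cl i κ)) / n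

/-- The exposure `D_i`: mean treatment status among clusters intersecting `𝒩(i,κ)`. -/
def exposure (ρ : Fin n → Fin n → ℝ) (cl : Fin n → Fin C) (κ : ℝ)
    (x : Fin C → Bool) (i : Fin n) : ℝ :=
  (∑ c : Fin C, (if x c then (1 : ℝ) else 0) *
      (if ∃ j ∈ nbhd ρ i κ, cl j = c then (1 : ℝ) else 0)) / phiMax ρ cl κ

/-- Sample mean of a vector. -/
def mean (v : Fin n → ℝ) : ℝ := (∑ i, v i) / n

/-- The OLS estimator: coefficient of a regression of outcomes on exposures. -/
def olsEst (ρ : Fin n → Fin n → ℝ) (cl : Fin n → Fin C) (κ : ℝ)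
    (Y : Fin n → (Fin n → Bool) → ℝ) (x : Fin C → Bool) : ℝ :=
  ((∑ i, exposure ρ cl κ x i * Y i (dvec cl x)) / n
      - mean (exposure ρ cl κ x) * mean (fun i => Y i (dvec cl x))) /
  ((∑ i, exposure ρ cl κ x i * exposure ρ cl κ x i) / n
      - mean (exposure ρ cl κ x) ^ 2)

/-- The exposure guess `D̃ = Â d`. -/
def exposureGuess (Ahat : Fin n → Fin n → ℝ) (cl : Fin n → Fin C)
    (x : Fin C → Bool) (i : Fin n) : ℝ :=
  ∑ j, Ahat i j * (if x (cl j) then (1 : ℝ) else 0)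

/-- The shrinkage (2SLS) estimator: the ratio of the empirical covariance of `D` and `Y`
to the empirical covariance of `D` and `D̃`, multiplied by `𝟏'Â𝟏/n`. -/
def shrinkEst (ρ : Fin n → Fin n → ℝ) (cl : Fin n → Fin C) (κ : ℝ)
    (Ahat : Fin n → Fin n → ℝ) (Y : Fin n → (Fin n → Bool) → ℝ)
    (x : Fin C → Bool) : ℝ :=
  (((∑ i, exposure ρ cl κ x i * Y i (dvec cl x)) / n
      - mean (exposure ρ cl κ x) * mean (fun i => Y i (dvec cl x))) /
   ((∑ i, exposure ρ cl κ x i * exposureGuess Ahat cl x i) / n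
      - mean (exposure ρ cl κ x) * mean (exposureGuess Ahat cl x))) *
  ((∑ i, ∑ j, Ahat i j) / n)

/-- The off-neighborhood part of a spillover matrix at radius `s`. -/
def offPart (ρ : Fin n → Fin n → ℝ) (s : ℝ) (A : Fin n → Fin n → ℝ) :
    Fin n → Fin n → ℝ :=
  fun i j => if j ∈ nbhd ρ i s then 0 else A i j

/-- `X_n = O_p(a_n)`: for every `ε > 0` there is `M > 0` with
`limsup_n P(|X_n| > M a_n) ≤ ε`. -/
def IsBigOp {Ω : ℕ → Type} [∀ m, MeasurableSpace (Ω m)]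
    (μ : ∀ m, Measure (Ω m)) (X : ∀ m, Ω m → ℝ) (a : ℕ → ℝ) : Prop :=
  ∀ ε : ℝ, 0 < ε → ∃ M : ℝ, 0 < M ∧
    Filter.limsup (fun m => (μ m {x | M * a m < |X m x|}).toReal) Filter.atTop ≤ ε


set_option maxHeartbeats 1600000

/-! ### Auxiliary lemmas for the proof of Lemma 1 -/

lemma mem_nbhd {ρ : Fin n → Fin n → ℝ} {i j : Fin n} {s : ℝ} :
    j ∈ nbhd ρ i s ↔ ρ i j ≤ s := by simp [nbhd]

lemma self_mem_nbhd {ρ : Fin n → Fin n → ℝ} (hρ : DistOK ρ) (i : Fin n) {s : ℝ}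
    (hs : 0 ≤ s) : i ∈ nbhd ρ i s := mem_nbhd.2 (by rw [hρ.1 i]; exact hs)

lemma nbhd_mono {ρ : Fin n → Fin n → ℝ} {i : Fin n} {s s' : ℝ} (h : s ≤ s') :
    nbhd ρ i s ⊆ nbhd ρ i s' := fun j hj => mem_nbhd.2 (le_trans (mem_nbhd.1 hj) h)

lemma stilde_nonneg (ρ : Fin n → Fin n → ℝ) (d : Fin n → Bool) (i : Fin n) :
    0 ≤ stilde ρ d i :=
  Real.sSup_nonneg fun _ hx => hx.1.le

lemma geom_rhs_nonneg {K₁ η : ℝ} (hK₁ : 0 ≤ K₁) (ρ : Fin n → Fin n → ℝ)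
    (d : Fin n → Bool) (i : Fin n) :
    0 ≤ K₁ * stilde ρ d i ^ (-η) :=
  mul_nonneg hK₁ (Real.rpow_nonneg (stilde_nonneg ρ d i) _)

lemma geomInterf_const {K₁ η : ℝ} (hK₁ : 0 ≤ K₁) (ρ : Fin n → Fin n → ℝ)
    (v : Fin n → ℝ) : GeomInterf ρ K₁ η (fun i _ => v i) := by
  intro i d
  simpa using geom_rhs_nonneg hK₁ ρ d i

lemma linearPO_const (v : Fin n → ℝ) : LinearPO (fun i _ => v i) := by
  intro d d' _ i; ring

lemma phi_pos {ρ : Fin n → Fin n → ℝ} (hρ : DistOK ρ) (cl : Fin n → Fin C)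
    (i : Fin n) {s : ℝ} (hs : 0 ≤ s) : 0 < phi ρ cl i s := by
  rw [phi, Finset.card_pos]
  exact ⟨cl i, Finset.mem_filter.2 ⟨Finset.mem_univ _, ⟨i, self_mem_nbhd hρ i hs, rfl⟩⟩⟩

/-- The set of clusters intersecting the `s`-neighborhood of `i`. -/
def Phiset (ρ : Fin n → Fin n → ℝ) (cl : Fin n → Fin C) (s : ℝ) (i : Fin n) :
    Finset (Fin C) :=
  Finset.univ.filter fun c => ∃ j ∈ nbhd ρ i s, cl j = c

lemma Phiset_card (ρ : Fin n → Fin n → ℝ) (cl : Fin n → Fin C) (s : ℝ) (i : Fin n) :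
    (Phiset ρ cl s i).card = phi ρ cl i s := rfl

/-- A representative of cluster `c` within the `s`-neighborhood of `i`. -/
def repPick (ρ : Fin n → Fin n → ℝ) (cl : Fin n → Fin C) (s : ℝ) (i : Fin n)
    (c : Fin C) : Fin n :=
  if h : ∃ j, j ∈ nbhd ρ i s ∧ cl j = c then h.choose else i

lemma repPick_spec {ρ : Fin n → Fin n → ℝ} {cl : Fin n → Fin C} {s : ℝ} {i : Fin n}
    {c : Fin C} (hc : c ∈ Phiset ρ cl s i) :
    repPick ρ cl s i c ∈ nbhd ρ i s ∧ cl (repPick ρ cl s i c) = c := by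
  have h : ∃ j, j ∈ nbhd ρ i s ∧ cl j = c := by
    simpa [Phiset] using (Finset.mem_filter.1 hc).2
  rw [repPick, dif_pos h]
  exact h.choose_spec

/-- The adversarial potential outcomes used in the proof of Lemma 1. -/
def Yadv (ρ : Fin n → Fin n → ℝ) (cl : Fin n → Fin C) (s cval : ℝ)
    (B : Finset (Fin n)) : Fin n → (Fin n → Bool) → ℝ :=
  fun i d => if i ∈ B then
    (cval / (phi ρ cl i s : ℝ)) *
      ∑ c ∈ Phiset ρ cl s i, (if d (repPick ρ cl s i c) then (1 : ℝ) else 0)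
    else 0

lemma Yadv_false (ρ : Fin n → Fin n → ℝ) (cl : Fin n → Fin C) (s cval : ℝ)
    (B : Finset (Fin n)) (i : Fin n) :
    Yadv ρ cl s cval B i (fun _ => false) = 0 := by
  simp [Yadv]

lemma Yadv_true {ρ : Fin n → Fin n → ℝ} (hρ : DistOK ρ) (cl : Fin n → Fin C)
    {s : ℝ} (hs : 0 ≤ s) (cval : ℝ) (B : Finset (Fin n)) (i : Fin n) :
    Yadv ρ cl s cval B i (fun _ => true) = if i ∈ B then cval else 0 := by
  have hφ : (0 : ℝ) < (phi ρ cl i s : ℝ) := by exact_mod_cast phi_pos hρ cl i hs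
  simp only [Yadv, if_pos, Finset.sum_const, Phiset_card, nsmul_eq_mul, mul_one]
  split
  · field_simp
  · rfl

lemma Yadv_nonneg (ρ : Fin n → Fin n → ℝ) (cl : Fin n → Fin C) {s cval : ℝ}
    (hc : 0 ≤ cval) (B : Finset (Fin n)) (i : Fin n) (d : Fin n → Bool) :
    0 ≤ Yadv ρ cl s cval B i d := by
  rw [Yadv]
  split
  · exact mul_nonneg (div_nonneg hc (Nat.cast_nonneg _))
      (Finset.sum_nonneg fun c _ => by positivity)
  · exact le_refl 0

lemma Yadv_le (ρ : Fin n → Fin n → ℝ) (cl : Fin n → Fin C) {s cval : ℝ}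
    (hc : 0 ≤ cval) (B : Finset (Fin n)) (i : Fin n) (d : Fin n → Bool) :
    Yadv ρ cl s cval B i d ≤ cval := by
  rw [Yadv]
  split
  · calc (cval / (phi ρ cl i s : ℝ)) *
        ∑ c ∈ Phiset ρ cl s i, (if d (repPick ρ cl s i c) then (1 : ℝ) else 0)
        ≤ (cval / (phi ρ cl i s : ℝ)) * (Phiset ρ cl s i).card := by
          refine mul_le_mul_of_nonneg_left ?_ (div_nonneg hc (Nat.cast_nonneg _))
          calc ∑ c ∈ Phiset ρ cl s i, (if d (repPick ρ cl s i c) then (1 : ℝ) else 0)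
              ≤ ∑ c ∈ Phiset ρ cl s i, (1 : ℝ) :=
                Finset.sum_le_sum fun c _ => by split <;> norm_num
            _ = (Phiset ρ cl s i).card := by simp
      _ ≤ cval := by
          rw [Phiset_card, div_mul_eq_mul_div]
          rcases Nat.eq_zero_or_pos (phi ρ cl i s) with h | h
          · simp [h, hc]
          · have : (0:ℝ) < (phi ρ cl i s : ℝ) := by exact_mod_cast h
            rw [mul_div_assoc, div_self this.ne', mul_one]
  · exact hc

lemma linearPO_Yadv (ρ : Fin n → Fin n → ℝ) (cl : Fin n → Fin C) (s cval : ℝ)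
    (B : Finset (Fin n)) : LinearPO (Yadv ρ cl s cval B) := by
  intro d d' hdisj i
  rw [Yadv_false]
  simp only [Yadv]
  split
  · rw [← mul_add, ← Finset.sum_add_distrib]
    have : ∀ c ∈ Phiset ρ cl s i,
        (if (d (repPick ρ cl s i c) || d' (repPick ρ cl s i c)) then (1:ℝ) else 0)
        = (if d (repPick ρ cl s i c) then (1:ℝ) else 0)
          + (if d' (repPick ρ cl s i c) then (1:ℝ) else 0) := by
      intro c _
      have := hdisj (repPick ρ cl s i c)
      cases hd : d (repPick ρ cl s i c) <;> cases hd' : d' (repPick ρ cl s i c) <;>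
        simp_all
    rw [Finset.sum_congr rfl this]
    ring
  · ring

/-- The defining set for `stilde` is nonempty. -/
lemma stilde_set_nonempty {ρ : Fin n → Fin n → ℝ} (hρ : DistOK ρ)
    (d : Fin n → Bool) (i : Fin n) :
    {s : ℝ | 0 < s ∧
      ((∀ j ∈ nbhd ρ i s, d j = true) ∨ (∀ j ∈ nbhd ρ i s, d j = false))}.Nonempty := by
  have : ∃ s₀ : ℝ, 0 < s₀ ∧ ∀ j ∈ nbhd ρ i s₀, j = i := by
    by_cases hT : (Finset.univ.filter fun j : Fin n => j ≠ i).Nonempty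
    · set T := Finset.univ.filter fun j : Fin n => j ≠ i with hTdef
      refine ⟨(T.inf' hT fun j => ρ i j) / 2, ?_, ?_⟩
      · have : 0 < T.inf' hT fun j => ρ i j := by
          rw [Finset.lt_inf'_iff]
          intro j hj
          have hji : j ≠ i := (Finset.mem_filter.1 hj).2
          exact hρ.2 i j (Ne.symm hji)
        linarith
      · intro j hj
        by_contra hji
        have hjT : j ∈ T := Finset.mem_filter.2 ⟨Finset.mem_univ _, hji⟩
        have h1 : T.inf' hT (fun j => ρ i j) ≤ ρ i j := Finset.inf'_le _ hjT
        have h2 : ρ i j ≤ (T.inf' hT fun j => ρ i j) / 2 := mem_nbhd.1 hj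
        have h3 : 0 < T.inf' hT fun j => ρ i j := by
          rw [Finset.lt_inf'_iff]
          intro k hk
          exact hρ.2 i k (Ne.symm (Finset.mem_filter.1 hk).2)
        linarith
    · refine ⟨1, one_pos, fun j _ => ?_⟩
      by_contra hji
      exact hT ⟨j, Finset.mem_filter.2 ⟨Finset.mem_univ _, hji⟩⟩
  obtain ⟨s₀, hs₀, hsub⟩ := this
  refine ⟨s₀, hs₀, ?_⟩
  cases hdi : d i
  · exact Or.inr fun j hj => by rw [hsub j hj, hdi]
  · exact Or.inl fun j hj => by rw [hsub j hj, hdi]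

lemma geomInterf_Yadv {K₁ η : ℝ} {ρ : Fin n → Fin n → ℝ} (hρ : DistOK ρ)
    (cl : Fin n → Fin C) {s cval : ℝ} (hs : 0 < s) (hc0 : 0 ≤ cval)
    (hK₁ : 0 ≤ K₁) (hcb : cval ≤ K₁ * s ^ (-η)) (hη : 0 < η)
    (B : Finset (Fin n)) : GeomInterf ρ K₁ η (Yadv ρ cl s cval B) := by
  intro i d
  set S := {s' : ℝ | 0 < s' ∧
    ((∀ j ∈ nbhd ρ i s', d j = true) ∨ (∀ j ∈ nbhd ρ i s', d j = false))} with hSdef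
  have hSne : S.Nonempty := stilde_set_nonempty hρ d i
  by_cases hcase : ∃ s' ∈ S, s ≤ s'
  · -- the neighborhood of radius `s` is saturated: the deviation is zero
    obtain ⟨s', hs'S, hss'⟩ := hcase
    obtain ⟨hs'pos, hsat⟩ := hs'S
    have hrep : ∀ c ∈ Phiset ρ cl s i, repPick ρ cl s i c ∈ nbhd ρ i s' :=
      fun c hc => nbhd_mono hss' (repPick_spec hc).1
    have hi : i ∈ nbhd ρ i s' := self_mem_nbhd hρ i hs'pos.le
    rcases hsat with hall | hall
    · have hdi : d i = true := hall i hi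
      have : Yadv ρ cl s cval B i d = Yadv ρ cl s cval B i (fun _ => true) := by
        simp only [Yadv]
        split
        · congr 1
          exact Finset.sum_congr rfl fun c hc => by simp [hall _ (hrep c hc)]
        · rfl
      rw [this, hdi, if_pos rfl, sub_self, abs_zero]
      exact geom_rhs_nonneg hK₁ ρ d i
    · have hdi : d i = false := hall i hi
      have : Yadv ρ cl s cval B i d = Yadv ρ cl s cval B i (fun _ => false) := by
        simp only [Yadv]
        split
        · congr 1
          exact Finset.sum_congr rfl fun c hc => by simp [hall _ (hrep c hc)]
        · rfl
      rw [this, hdi]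
      simp only [Bool.false_eq_true, if_false, sub_self, abs_zero]
      exact geom_rhs_nonneg hK₁ ρ d i
  · -- `stilde ≤ s`, so the crude bound `cval ≤ K₁ s^{-η} ≤ K₁ stilde^{-η}` suffices
    push_neg at hcase
    have hbdd : BddAbove S := ⟨s, fun y hy => (hcase y hy).le⟩
    have htle : stilde ρ d i ≤ s := csSup_le hSne fun y hy => (hcase y hy).le
    have htpos : 0 < stilde ρ d i :=
      lt_of_lt_of_le hSne.choose_spec.1 (le_csSup hbdd hSne.choose_spec)
    have hmono : s ^ (-η) ≤ stilde ρ d i ^ (-η) :=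
      Real.rpow_le_rpow_of_nonpos htpos htle (by linarith)
    have hbound : |Yadv ρ cl s cval B i d -
        (if d i then Yadv ρ cl s cval B i (fun _ => true)
          else Yadv ρ cl s cval B i (fun _ => false))| ≤ cval := by
      rw [abs_sub_le_iff]
      constructor
      · have h1 := Yadv_le (s := s) ρ cl hc0 B i d
        have h2 : 0 ≤ (if d i then Yadv ρ cl s cval B i (fun _ => true)
            else Yadv ρ cl s cval B i (fun _ => false)) := by
          split <;> exact Yadv_nonneg (s := s) ρ cl hc0 B i _
        linarith
      · have h1 := Yadv_nonneg (s := s) ρ cl hc0 B i d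
        have h2 : (if d i then Yadv ρ cl s cval B i (fun _ => true)
            else Yadv ρ cl s cval B i (fun _ => false)) ≤ cval := by
          split <;> exact Yadv_le (s := s) ρ cl hc0 B i _
        linarith
    calc |Yadv ρ cl s cval B i d - _| ≤ cval := hbound
      _ ≤ K₁ * s ^ (-η) := hcb
      _ ≤ K₁ * stilde ρ d i ^ (-η) := mul_le_mul_of_nonneg_left hmono hK₁

/-! ### Probability on finite spaces -/

section ProbFin

variable {Ω : Type*} [Fintype Ω] [MeasurableSpace Ω] [MeasurableSingletonClass Ω]
  (μ : Measure Ω) [IsProbabilityMeasure μ]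

lemma meas_toReal_eq_sum (S : Set Ω) :
    (μ S).toReal = ∑ x ∈ Finset.univ.filter (· ∈ S), (μ {x}).toReal := by
  have h1 : S = ⋃ x ∈ Finset.univ.filter (· ∈ S), ({x} : Set Ω) := by
    ext y; simp
  have h2 : μ S = ∑ x ∈ Finset.univ.filter (· ∈ S), μ {x} := by
    conv_lhs => rw [h1]
    refine measure_biUnion_finset (f := fun x : Ω => ({x} : Set Ω)) ?_
      fun x _ => measurableSet_singleton x
    intro x _ y _ hxy
    simp [Function.onFun, hxy]
  rw [h2, ENNReal.toReal_sum fun x _ => measure_ne_top μ _]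

lemma sum_probs_eq_one : ∑ x : Ω, (μ {x}).toReal = 1 := by
  have h := meas_toReal_eq_sum μ Set.univ
  simpa using h.symm

lemma integral_eq_sum (f : Ω → ℝ) :
    ∫ x, f x ∂μ = ∑ x : Ω, (μ {x}).toReal * f x := by
  rw [integral_fintype Integrable.of_finite]
  simp [smul_eq_mul, measureReal_def]

lemma int_abs_mul_le (f g : Ω → ℝ) :
    ∫ x, |f x * g x| ∂μ ≤
      Real.sqrt (∫ x, (f x) ^ 2 ∂μ) * Real.sqrt (∫ x, (g x) ^ 2 ∂μ) := by
  rw [integral_eq_sum, integral_eq_sum, integral_eq_sum]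
  have h0 : ∀ x : Ω, (0 : ℝ) ≤ (μ {x}).toReal := fun x => ENNReal.toReal_nonneg
  have e1 : ∀ x : Ω, Real.sqrt ((μ {x}).toReal) * |f x| *
      (Real.sqrt ((μ {x}).toReal) * |g x|) = (μ {x}).toReal * |f x * g x| := by
    intro x
    rw [abs_mul, mul_mul_mul_comm, Real.mul_self_sqrt (h0 x)]
  have e2 : ∀ (h : Ω → ℝ) (x : Ω),
      (Real.sqrt ((μ {x}).toReal) * |h x|) ^ 2 = (μ {x}).toReal * (h x) ^ 2 := by
    intro h x
    rw [mul_pow, Real.sq_sqrt (h0 x), sq_abs]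
  have key := Finset.sum_mul_sq_le_sq_mul_sq Finset.univ
    (fun x : Ω => Real.sqrt ((μ {x}).toReal) * |f x|)
    (fun x : Ω => Real.sqrt ((μ {x}).toReal) * |g x|)
  simp only [e1, e2] at key
  have hL : (0 : ℝ) ≤ ∑ x : Ω, (μ {x}).toReal * |f x * g x| :=
    Finset.sum_nonneg fun x _ => mul_nonneg (h0 x) (abs_nonneg _)
  have hA : (0 : ℝ) ≤ ∑ x : Ω, (μ {x}).toReal * (f x) ^ 2 :=
    Finset.sum_nonneg fun x _ => mul_nonneg (h0 x) (sq_nonneg _)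
  calc ∑ x : Ω, (μ {x}).toReal * |f x * g x|
      = Real.sqrt ((∑ x : Ω, (μ {x}).toReal * |f x * g x|) ^ 2) :=
        (Real.sqrt_sq hL).symm
    _ ≤ Real.sqrt ((∑ x : Ω, (μ {x}).toReal * (f x) ^ 2) *
          ∑ x : Ω, (μ {x}).toReal * (g x) ^ 2) := Real.sqrt_le_sqrt key
    _ = _ := Real.sqrt_mul hA _

lemma int_abs_le_sqrt (f : Ω → ℝ) :
    ∫ x, |f x| ∂μ ≤ Real.sqrt (∫ x, (f x) ^ 2 ∂μ) := by
  have h := int_abs_mul_le μ f (fun _ => 1)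
  have h1 : ∫ x, |f x * 1| ∂μ = ∫ x, |f x| ∂μ := by simp
  have h2 : ∫ x, ((fun _ : Ω => (1 : ℝ)) x) ^ 2 ∂μ = 1 := by simp
  rw [h1, h2, Real.sqrt_one, mul_one] at h
  exact h

lemma markov_fin (f : Ω → ℝ) {t : ℝ} (ht : 0 < t) :
    (μ {x | t ≤ |f x|}).toReal ≤ (∫ x, |f x| ∂μ) / t := by
  rw [le_div_iff₀ ht, integral_eq_sum, meas_toReal_eq_sum]
  have h0 : ∀ x : Ω, (0 : ℝ) ≤ (μ {x}).toReal := fun x => ENNReal.toReal_nonneg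
  calc (∑ x ∈ Finset.univ.filter (· ∈ {x | t ≤ |f x|}), (μ {x}).toReal) * t
      = ∑ x ∈ Finset.univ.filter (· ∈ {x | t ≤ |f x|}), (μ {x}).toReal * t := by
        rw [Finset.sum_mul]
    _ ≤ ∑ x ∈ Finset.univ.filter (· ∈ {x | t ≤ |f x|}), (μ {x}).toReal * |f x| := by
        refine Finset.sum_le_sum fun x hx => ?_
        have hfx : t ≤ |f x| := by simpa using (Finset.mem_filter.1 hx).2
        exact mul_le_mul_of_nonneg_left hfx (h0 x)
    _ ≤ ∑ x : Ω, (μ {x}).toReal * |f x| :=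
        Finset.sum_le_sum_of_subset_of_nonneg (Finset.filter_subset _ _)
          fun x _ _ => mul_nonneg (h0 x) (abs_nonneg _)

lemma prob_inter_ge (A B : Set Ω) :
    1 - (μ Aᶜ).toReal - (μ Bᶜ).toReal ≤ (μ (A ∩ B)).toReal := by
  have hm : ∀ S : Set Ω, MeasurableSet S := fun S => S.to_countable.measurableSet
  have h1 : μ (A ∩ B)ᶜ ≤ μ Aᶜ + μ Bᶜ := by
    rw [Set.compl_inter]; exact measure_union_le _ _
  have h2 : (μ (A ∩ B)).toReal = 1 - (μ (A ∩ B)ᶜ).toReal := by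
    have := measure_compl (hm (A ∩ B)) (measure_ne_top μ _)
    rw [measure_univ] at this
    have h3 : (μ (A ∩ B)ᶜ).toReal = 1 - (μ (A ∩ B)).toReal := by
      rw [this, ENNReal.toReal_sub_of_le prob_le_one ENNReal.one_ne_top, ENNReal.toReal_one]
    linarith
  have h4 : (μ (A ∩ B)ᶜ).toReal ≤ (μ Aᶜ).toReal + (μ Bᶜ).toReal := by
    rw [← ENNReal.toReal_add (measure_ne_top μ _) (measure_ne_top μ _)]
    exact ENNReal.toReal_mono
      (ENNReal.add_ne_top.2 ⟨measure_ne_top μ _, measure_ne_top μ _⟩) h1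
  linarith

lemma nonempty_of_prob_pos {S : Set Ω} (h : 0 < (μ S).toReal) : S.Nonempty := by
  rw [Set.nonempty_iff_ne_empty]
  rintro rfl
  simp at h

lemma meas_toReal_mono {A B : Set Ω} (h : A ⊆ B) : (μ A).toReal ≤ (μ B).toReal :=
  ENNReal.toReal_mono (measure_ne_top μ _) (measure_mono h)

lemma meas_toReal_le_one (S : Set Ω) : (μ S).toReal ≤ 1 := by
  simpa using meas_toReal_mono μ (Set.subset_univ S)

lemma int_sub_mean_sq (f : Ω → ℝ) :
    ∫ x, (f x - ∫ y, f y ∂μ) ^ 2 ∂μ = variance f μ := by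
  rw [variance_eq_sub MemLp.of_discrete]
  set c := ∫ y, f y ∂μ with hc
  have hfsq : ∫ x, (f ^ 2) x ∂μ = ∫ x, (f x) ^ 2 ∂μ := by simp [Pi.pow_apply]
  rw [hfsq, integral_eq_sum, integral_eq_sum]
  have hcs : ∑ x : Ω, (μ {x}).toReal * f x = c := (integral_eq_sum μ f).symm
  have hone := sum_probs_eq_one μ
  calc ∑ x : Ω, (μ {x}).toReal * (f x - c) ^ 2
      = ∑ x : Ω, ((μ {x}).toReal * (f x) ^ 2 - (2 * c) * ((μ {x}).toReal * f x)
          + c ^ 2 * (μ {x}).toReal) := Finset.sum_congr rfl fun x _ => by ring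
    _ = (∑ x : Ω, (μ {x}).toReal * (f x) ^ 2)
          - (2 * c) * (∑ x : Ω, (μ {x}).toReal * f x)
          + c ^ 2 * ∑ x : Ω, (μ {x}).toReal := by
        rw [Finset.sum_add_distrib, Finset.sum_sub_distrib, Finset.mul_sum, Finset.mul_sum]
    _ = _ := by rw [hcs, hone]; ring

end ProbFin

/-! ### Moments under the design measure -/

lemma bern_true {p : ℝ} (hp1 : p ≤ 1) : bern p {true} = ENNReal.ofReal p := by
  rw [bern, PMF.toMeasure_apply_singleton _ _ (measurableSet_singleton _),
    PMF.bernoulli_apply]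
  simp only [cond_true]; rw [min_eq_left (Real.toNNReal_le_one.2 hp1)]; rfl

lemma design_all (C : ℕ) {p : ℝ} (hp1 : p ≤ 1) (S : Finset (Fin C)) :
    designMeasure C p {x | ∀ c ∈ S, x c = true} = ENNReal.ofReal p ^ S.card := by
  have hset : {x : Fin C → Bool | ∀ c ∈ S, x c = true} =
      Set.univ.pi fun c => if c ∈ S then ({true} : Set Bool) else Set.univ := by
    ext x
    simp only [Set.mem_pi, Set.mem_univ, forall_true_left, Set.mem_setOf_eq]
    constructor
    · intro h c
      by_cases hc : c ∈ S <;> simp [hc, h]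
    · intro h c hc
      have := h c
      simpa [hc] using this
  rw [designMeasure, hset, Measure.pi_pi]
  calc ∏ c : Fin C, bern p (if c ∈ S then ({true} : Set Bool) else Set.univ)
      = ∏ c : Fin C, (if c ∈ S then ENNReal.ofReal p else 1) := by
        refine Finset.prod_congr rfl fun c _ => ?_
        by_cases hc : c ∈ S
        · simp [hc, bern_true hp1]
        · rw [if_neg hc, if_neg hc, measure_univ]
    _ = ∏ c ∈ Finset.univ ∩ S, ENNReal.ofReal p := Finset.prod_ite_mem _ _ _
    _ = ENNReal.ofReal p ^ S.card := by
        rw [Finset.univ_inter, Finset.prod_const]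

lemma design_all_toReal (C : ℕ) {p : ℝ} (hp0 : 0 ≤ p) (hp1 : p ≤ 1)
    (S : Finset (Fin C)) :
    (designMeasure C p {x | ∀ c ∈ S, x c = true}).toReal = p ^ S.card := by
  rw [design_all C hp1 S, ENNReal.toReal_pow, ENNReal.toReal_ofReal hp0]

lemma int_ind (C : ℕ) {p : ℝ} (hp0 : 0 ≤ p) (hp1 : p ≤ 1) (c : Fin C) :
    ∫ x : Fin C → Bool, (if x c then (1 : ℝ) else 0) ∂(designMeasure C p) = p := by
  have h : (fun x : Fin C → Bool => if x c then (1 : ℝ) else 0) =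
      Set.indicator {x : Fin C → Bool | ∀ e ∈ ({c} : Finset (Fin C)), x e = true}
        (fun _ => (1 : ℝ)) := by
    funext x
    by_cases hx : x c <;> simp [Set.indicator, hx]
  rw [h, integral_indicator_const _ (Set.to_countable _).measurableSet,
    measureReal_def, design_all_toReal C hp0 hp1]
  simp

lemma int_ind_pair (C : ℕ) {p : ℝ} (hp0 : 0 ≤ p) (hp1 : p ≤ 1) {c c' : Fin C}
    (hcc' : c ≠ c') :
    ∫ x : Fin C → Bool, (if x c then (1 : ℝ) else 0) * (if x c' then (1 : ℝ) else 0)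
      ∂(designMeasure C p) = p ^ 2 := by
  have h : (fun x : Fin C → Bool =>
      (if x c then (1 : ℝ) else 0) * (if x c' then (1 : ℝ) else 0)) =
      Set.indicator {x : Fin C → Bool | ∀ e ∈ ({c, c'} : Finset (Fin C)), x e = true}
        (fun _ => (1 : ℝ)) := by
    funext x
    by_cases hx : x c <;> by_cases hx' : x c' <;> simp [Set.indicator, hx, hx']
  rw [h, integral_indicator_const _ (Set.to_countable _).measurableSet,
    measureReal_def, design_all_toReal C hp0 hp1]
  rw [Finset.card_insert_of_notMem (by simp [hcc']), Finset.card_singleton]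
  simp

lemma Fmean (C : ℕ) {p : ℝ} (hp0 : 0 ≤ p) (hp1 : p ≤ 1) (Φ : Finset (Fin C)) :
    ∫ x : Fin C → Bool, (∑ c ∈ Φ, if x c then (1 : ℝ) else 0) / (Φ.card : ℝ)
      ∂(designMeasure C p)
      = (Φ.card : ℝ) * p / (Φ.card : ℝ) := by
  rw [integral_div, integral_finset_sum _ fun c _ => Integrable.of_finite]
  rw [Finset.sum_congr rfl fun c _ => int_ind C hp0 hp1 c, Finset.sum_const,
    nsmul_eq_mul]

lemma Gsq_moment (C : ℕ) {p : ℝ} (hp0 : 0 ≤ p) (hp1 : p ≤ 1) (Φ : Finset (Fin C))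
    (hΦ : 0 < Φ.card) :
    ∫ x : Fin C → Bool,
      ((∑ c ∈ Φ, if x c then (1 : ℝ) else 0) / (Φ.card : ℝ) - p) ^ 2
      ∂(designMeasure C p) ≤ 1 / (Φ.card : ℝ) := by
  set μ := designMeasure C p
  set φ : ℝ := (Φ.card : ℝ) with hφdef
  have hφ : (0 : ℝ) < φ := by rw [hφdef]; exact_mod_cast hΦ
  have hpt : ∀ x : Fin C → Bool,
      ((∑ c ∈ Φ, if x c then (1 : ℝ) else 0) / φ - p) ^ 2
      = (∑ c ∈ Φ, ∑ c' ∈ Φ, ((if x c then (1 : ℝ) else 0) - p)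
          * ((if x c' then (1 : ℝ) else 0) - p)) / φ ^ 2 := by
    intro x
    have h1 : (∑ c ∈ Φ, if x c then (1 : ℝ) else 0) / φ - p
        = (∑ c ∈ Φ, ((if x c then (1 : ℝ) else 0) - p)) / φ := by
      rw [Finset.sum_sub_distrib, Finset.sum_const, nsmul_eq_mul, ← hφdef]
      field_simp
    rw [h1, div_pow, sq, Finset.sum_mul_sum]
  have hint : ∀ c ∈ Φ, ∀ c' ∈ Φ,
      ∫ x : Fin C → Bool, ((if x c then (1 : ℝ) else 0) - p)
        * ((if x c' then (1 : ℝ) else 0) - p) ∂μ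
      = if c = c' then p - p ^ 2 else 0 := by
    intro c _ c' _
    have hexp : (fun x : Fin C → Bool => ((if x c then (1 : ℝ) else 0) - p)
        * ((if x c' then (1 : ℝ) else 0) - p))
        = fun x : Fin C → Bool => (if x c then (1 : ℝ) else 0) * (if x c' then (1:ℝ) else 0)
          - p * (if x c then (1 : ℝ) else 0)
          - p * (if x c' then (1 : ℝ) else 0) + p * p := by
      funext x; ring
    rw [hexp]
    rw [integral_add (by exact (Integrable.of_finite).sub Integrable.of_finite)
      (integrable_const _), integral_sub
      (by exact (Integrable.of_finite).sub Integrable.of_finite) Integrable.of_finite,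
      integral_sub Integrable.of_finite Integrable.of_finite,
      integral_const_mul, integral_const_mul, int_ind C hp0 hp1,
      int_ind C hp0 hp1, integral_const]
    by_cases hcc : c = c'
    · subst hcc
      have : (fun x : Fin C → Bool => (if x c then (1 : ℝ) else 0)
          * (if x c then (1 : ℝ) else 0)) = fun x => (if x c then (1 : ℝ) else 0) := by
        funext x; by_cases hx : x c <;> simp [hx]
      rw [this, int_ind C hp0 hp1, if_pos rfl]
      simp; ring
    · rw [int_ind_pair C hp0 hp1 hcc, if_neg hcc]
      simp; ring
  calc ∫ x : Fin C → Bool,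
        ((∑ c ∈ Φ, if x c then (1 : ℝ) else 0) / φ - p) ^ 2 ∂μ
      = ∫ x : Fin C → Bool, (∑ c ∈ Φ, ∑ c' ∈ Φ, ((if x c then (1 : ℝ) else 0) - p)
          * ((if x c' then (1 : ℝ) else 0) - p)) / φ ^ 2 ∂μ := by
        exact integral_congr_ae (Filter.Eventually.of_forall fun x => hpt x)
    _ = (∑ c ∈ Φ, ∑ c' ∈ Φ, ∫ x : Fin C → Bool, ((if x c then (1 : ℝ) else 0) - p)
          * ((if x c' then (1 : ℝ) else 0) - p) ∂μ) / φ ^ 2 := by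
        rw [integral_div, integral_finset_sum _ fun c _ => Integrable.of_finite]
        congr 1
        exact Finset.sum_congr rfl fun c _ =>
          integral_finset_sum _ fun c' _ => Integrable.of_finite
    _ = (∑ c ∈ Φ, (p - p ^ 2)) / φ ^ 2 := by
        congr 1
        refine Finset.sum_congr rfl fun c hc => ?_
        rw [Finset.sum_congr rfl fun c' hc' => hint c hc c' hc', Finset.sum_ite_eq,
          if_pos hc]
    _ ≤ (∑ c ∈ Φ, (1 : ℝ)) / φ ^ 2 := by
        gcongr with c hc
        nlinarith
    _ = 1 / φ := by
        rw [Finset.sum_const, nsmul_eq_mul, mul_one, ← hφdef, sq]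
        field_simp

/-- Lemma 1: if a linear estimator paired with a cluster-randomized design
converges at rate `a_n` for every potential outcome in the class, then the fraction of
units whose `a_n^{-1/η+ε}`-neighborhood intersects at least `a_n^{-δ}` clusters vanishes. -/
theorem subsample_lemma
    (η K₁ Ybar p : ℝ)
    (hη : 0 < η) (hK₁ : 0 < K₁) (hYbar : 0 < Ybar)
    (hp0 : 0 < p) (hp1 : p < 1)
    (ρ : ∀ m : ℕ, Fin m → Fin m → ℝ) (hρ : ∀ m, DistOK (ρ m))
    (C : ℕ → ℕ) (cl : ∀ m : ℕ, Fin m → Fin (C m))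
    -- linear estimator with weights of uniformly summable standard deviations
    (w : ∀ m : ℕ, (Fin m → Bool) → Fin m → ℝ)
    (hw : ∃ B : ℝ, ∀ m : ℕ,
      ∑ i : Fin m, Real.sqrt (variance
          (fun x : Fin (C m) → Bool => w m (dvec (cl m) x) i)
          (designMeasure (C m) p)) ≤ B)
    -- the rate sequence
    (a : ℕ → ℝ) (hapos : ∀ m, 0 < a m)
    (ha0 : Filter.Tendsto a Filter.atTop (𝓝 0))
    -- O_p(a_n) convergence for every admissible potential outcome sequence
    (hconv : ∀ Y : ∀ m : ℕ, Fin m → (Fin m → Bool) → ℝ,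
      (∀ m, GeomInterf (ρ m) K₁ η (Y m)) →
      (∀ m (i : Fin m) (d : Fin m → Bool), |Y m i d| ≤ Ybar) →
      (∀ m, LinearPO (Y m)) →
      IsBigOp (fun m => designMeasure (C m) p)
        (fun m x => (∑ i, Y m i (dvec (cl m) x) * w m (dvec (cl m) x) i) - age (Y m))
        a) :
    ∀ ε δ : ℝ, 0 < ε → ε < 1 / η → 0 < δ →
      Filter.Tendsto (fun m : ℕ =>
        (∑ i : Fin m, if a m ^ (-δ) ≤ ((phi (ρ m) (cl m) i (a m ^ (-(1 / η) + ε)) : ℝ))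
          then (1 : ℝ) else 0) / m)
        Filter.atTop (𝓝 0) := by
  intro ε δ hε hεη hδ
  classical
  obtain ⟨B0, hwB⟩ := hw
  have hB0 : 0 ≤ B0 := by simpa using hwB 0
  have hεη1 : ε * η < 1 := (lt_div_iff₀ hη).1 hεη
  have hεηpos : 0 < ε * η := mul_pos hε hη
  -- notation
  set sr : ℕ → ℝ := fun m => a m ^ (-(1 / η) + ε) with hsdef
  have hspos : ∀ m, 0 < sr m := fun m => Real.rpow_pos_of_pos (hapos m) _
  set τ : ℕ → ℝ := fun m => a m ^ (-δ) with hτdef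
  have hτpos : ∀ m, 0 < τ m := fun m => Real.rpow_pos_of_pos (hapos m) _
  set Bset : ∀ m : ℕ, Finset (Fin m) := fun m =>
    Finset.univ.filter fun i => τ m ≤ ((phi (ρ m) (cl m) i (sr m) : ℝ)) with hBsetdef
  set β : ℕ → ℝ := fun m => ((Bset m).card : ℝ) / m with hβdef
  have hgoal_eq : (fun m : ℕ => (∑ i : Fin m,
      if a m ^ (-δ) ≤ ((phi (ρ m) (cl m) i (a m ^ (-(1 / η) + ε)) : ℝ))
        then (1 : ℝ) else 0) / m) = β := by
    funext m
    rw [hβdef, Finset.sum_boole]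
  rw [hgoal_eq]
  by_contra hcon
  have hβ0 : ∀ m, 0 ≤ β m := fun m => div_nonneg (Nat.cast_nonneg _) (Nat.cast_nonneg _)
  obtain ⟨r, hr, hfreq⟩ : ∃ r > 0, ∃ᶠ m in Filter.atTop, r ≤ β m := by
    rw [Metric.tendsto_atTop] at hcon
    push_neg at hcon
    obtain ⟨r, hrpos, hN⟩ := hcon
    refine ⟨r, hrpos, Filter.frequently_atTop.2 fun N => ?_⟩
    obtain ⟨m, hm, hdist⟩ := hN N
    exact ⟨m, hm, by simpa [Real.dist_eq, abs_of_nonneg (hβ0 m)] using hdist⟩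
  -- amplitude
  set cval : ℕ → ℝ := fun m => min (K₁ * a m ^ (1 - ε * η)) Ybar with hcdef
  have hcpos : ∀ m, 0 < cval m := fun m =>
    lt_min (mul_pos hK₁ (Real.rpow_pos_of_pos (hapos m) _)) hYbar
  have hsη : ∀ m, sr m ^ (-η) = a m ^ (1 - ε * η) := by
    intro m
    have he : (-(1 / η) + ε) * (-η) = 1 - ε * η := by field_simp; ring
    rw [hsdef, ← Real.rpow_mul (hapos m).le, he]
  have hcb : ∀ m, cval m ≤ K₁ * sr m ^ (-η) := fun m => by
    rw [hsη m]; exact min_le_left _ _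
  have hcY : ∀ m, cval m ≤ Ybar := fun m => min_le_right _ _
  -- adversarial outcomes
  set Yf : ∀ m : ℕ, Fin m → (Fin m → Bool) → ℝ := fun m =>
    Yadv (ρ m) (cl m) (sr m) (cval m) (Bset m) with hYfdef
  have hYfgi : ∀ m, GeomInterf (ρ m) K₁ η (Yf m) := fun m =>
    geomInterf_Yadv (hρ m) (cl m) (hspos m) (hcpos m).le hK₁.le (hcb m) hη (Bset m)
  have hYfbd : ∀ m (i : Fin m) (d : Fin m → Bool), |Yf m i d| ≤ Ybar := by
    intro m i d
    rw [hYfdef, abs_of_nonneg (Yadv_nonneg (s := sr m) (ρ m) (cl m) (hcpos m).le (Bset m) i d)]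
    exact le_trans (Yadv_le (s := sr m) (ρ m) (cl m) (hcpos m).le (Bset m) i d) (hcY m)
  have hYflin : ∀ m, LinearPO (Yf m) := fun m => linearPO_Yadv _ _ _ _ _
  obtain ⟨M₁, hM₁, hlim₁⟩ := hconv Yf hYfgi hYfbd hYflin (1/8) (by norm_num)
  -- comparison constant outcomes
  set Yg : ∀ m : ℕ, Fin m → (Fin m → Bool) → ℝ := fun m i _ =>
    if i ∈ Bset m then cval m * p else 0 with hYgdef
  have hYggi : ∀ m, GeomInterf (ρ m) K₁ η (Yg m) := fun m =>
    geomInterf_const hK₁.le (ρ m) (fun i => if i ∈ Bset m then cval m * p else 0)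
  have hYgbd : ∀ m (i : Fin m) (d : Fin m → Bool), |Yg m i d| ≤ Ybar := by
    intro m i d
    rw [hYgdef]
    dsimp only
    split
    · rw [abs_of_nonneg (mul_nonneg (hcpos m).le hp0.le)]
      calc cval m * p ≤ Ybar * 1 :=
          mul_le_mul (hcY m) hp1.le hp0.le hYbar.le
        _ = Ybar := mul_one _
    · simpa using hYbar.le
  have hYglin : ∀ m, LinearPO (Yg m) := fun m => linearPO_const _
  obtain ⟨M₂, hM₂, hlim₂⟩ := hconv Yg hYggi hYgbd hYglin (1/8) (by norm_num)
  -- mean weights and sign outcomes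
  set μw : ∀ m : ℕ, Fin m → ℝ := fun m i =>
    ∫ x, w m (dvec (cl m) x) i ∂(designMeasure (C m) p) with hμwdef
  set σs : ∀ m : ℕ, Fin m → ℝ := fun m i => if 0 ≤ μw m i then 1 else -1 with hσdef
  set Y3 : ∀ m : ℕ, Fin m → (Fin m → Bool) → ℝ := fun m i _ => Ybar * σs m i with hY3def
  have hσ1 : ∀ m (i : Fin m), |σs m i| = 1 := by
    intro m i
    rw [hσdef]
    dsimp only
    split <;> norm_num
  have hY3gi : ∀ m, GeomInterf (ρ m) K₁ η (Y3 m) := fun m =>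
    geomInterf_const hK₁.le (ρ m) (fun i => Ybar * σs m i)
  have hY3bd : ∀ m (i : Fin m) (d : Fin m → Bool), |Y3 m i d| ≤ Ybar := by
    intro m i d
    rw [hY3def]
    dsimp only
    rw [abs_mul, hσ1 m i, mul_one, abs_of_pos hYbar]
  obtain ⟨M₃, hM₃, hlim₃⟩ := hconv Y3 hY3gi hY3bd (fun m => linearPO_const _) (1/8) (by norm_num)
  -- boundedness for limsup extraction
  have hbdd : ∀ (u : ℕ → ℝ), (∀ m, u m ≤ 1) →
      Filter.IsBoundedUnder (· ≤ ·) Filter.atTop u :=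
    fun u hu => Filter.isBoundedUnder_of ⟨1, hu⟩
  have hev₁ := Filter.eventually_lt_of_limsup_lt
    (lt_of_le_of_lt hlim₁ (by norm_num : (1:ℝ)/8 < 1/4))
    (hbdd _ fun m => meas_toReal_le_one _ _)
  have hev₂ := Filter.eventually_lt_of_limsup_lt
    (lt_of_le_of_lt hlim₂ (by norm_num : (1:ℝ)/8 < 1/4))
    (hbdd _ fun m => meas_toReal_le_one _ _)
  have hev₃ := Filter.eventually_lt_of_limsup_lt
    (lt_of_le_of_lt hlim₃ (by norm_num : (1:ℝ)/8 < 1/4))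
    (hbdd _ fun m => meas_toReal_le_one _ _)
  -- noise bound
  have hvar : ∀ m (i : Fin m),
      ∫ x, (w m (dvec (cl m) x) i - μw m i) ^ 2 ∂(designMeasure (C m) p)
        = variance (fun x => w m (dvec (cl m) x) i) (designMeasure (C m) p) :=
    fun m i => int_sub_mean_sq _ _
  have hnoise : ∀ m, ∫ x, |∑ i, σs m i * (w m (dvec (cl m) x) i - μw m i)|
      ∂(designMeasure (C m) p) ≤ B0 := by
    intro m
    calc ∫ x, |∑ i, σs m i * (w m (dvec (cl m) x) i - μw m i)| ∂(designMeasure (C m) p)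
        ≤ ∫ x, ∑ i, |σs m i * (w m (dvec (cl m) x) i - μw m i)| ∂(designMeasure (C m) p) :=
          integral_mono Integrable.of_finite Integrable.of_finite
            (fun x => Finset.abs_sum_le_sum_abs _ _)
      _ = ∑ i, ∫ x, |σs m i * (w m (dvec (cl m) x) i - μw m i)| ∂(designMeasure (C m) p) :=
          integral_finset_sum _ fun i _ => Integrable.of_finite
      _ ≤ ∑ i, Real.sqrt (variance (fun x => w m (dvec (cl m) x) i) (designMeasure (C m) p)) := by
          refine Finset.sum_le_sum fun i _ => ?_
          have h1 : ∀ x : Fin (C m) → Bool, |σs m i * (w m (dvec (cl m) x) i - μw m i)|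
              = |w m (dvec (cl m) x) i - μw m i| := by
            intro x; rw [abs_mul, hσ1 m i, one_mul]
          rw [integral_congr_ae (Filter.Eventually.of_forall h1)]
          have h2 := int_abs_le_sqrt (designMeasure (C m) p)
            (fun x => w m (dvec (cl m) x) i - μw m i)
          rwa [hvar m i] at h2
      _ ≤ B0 := hwB m
  -- bound on the total mean weight
  have habs2 : ∀ u v : ℝ, u - v ≤ |u| + |v| := by
    intro u v
    calc u - v ≤ |u - v| := le_abs_self _
      _ ≤ |u| + |v| := by
          rw [sub_eq_add_neg]
          exact (abs_add_le _ _).trans (by rw [abs_neg])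
  set B' : ℝ := M₃ / Ybar + 8 * (B0 + 1) with hB'def
  have hevB' : ∀ᶠ m in Filter.atTop, ∑ i, |μw m i| ≤ B' := by
    filter_upwards [hev₃, ha0.eventually (gt_mem_nhds one_pos)] with m hP ha1
    have hPn : ((designMeasure (C m) p)
        {x | 8 * (B0 + 1) ≤ |∑ i, σs m i * (w m (dvec (cl m) x) i - μw m i)|}).toReal
        ≤ 1/8 := by
      refine le_trans (markov_fin _ _ (by positivity)) ?_
      calc (∫ x, |∑ i, σs m i * (w m (dvec (cl m) x) i - μw m i)|
            ∂(designMeasure (C m) p)) / (8 * (B0 + 1))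
          ≤ B0 / (8 * (B0 + 1)) := by gcongr; exact hnoise m
        _ ≤ 1/8 := by
            rw [div_le_div_iff₀ (by positivity) (by norm_num)]
            nlinarith
    have hint := prob_inter_ge (designMeasure (C m) p)
      {x | M₃ * a m < |(∑ i, Y3 m i (dvec (cl m) x) * w m (dvec (cl m) x) i) - age (Y3 m)|}ᶜ
      {x | 8 * (B0 + 1) ≤ |∑ i, σs m i * (w m (dvec (cl m) x) i - μw m i)|}ᶜ
    rw [compl_compl, compl_compl] at hint
    have hpos : 0 < ((designMeasure (C m) p)
        ({x | M₃ * a m < |(∑ i, Y3 m i (dvec (cl m) x) * w m (dvec (cl m) x) i) - age (Y3 m)|}ᶜ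
          ∩ {x | 8 * (B0 + 1) ≤ |∑ i, σs m i * (w m (dvec (cl m) x) i - μw m i)|}ᶜ)).toReal := by
      have := hP
      linarith
    obtain ⟨x, hx1, hx2⟩ := nonempty_of_prob_pos _ hpos
    simp only [Set.mem_compl_iff, Set.mem_setOf_eq, not_lt, not_le] at hx1 hx2
    have hage3 : age (Y3 m) = 0 := by simp [age, hY3def]
    have hZ3 : (∑ i, Y3 m i (dvec (cl m) x) * w m (dvec (cl m) x) i) - age (Y3 m)
        = Ybar * ∑ i, σs m i * w m (dvec (cl m) x) i := by
      rw [hage3, sub_zero, Finset.mul_sum]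
      refine Finset.sum_congr rfl fun i _ => ?_
      rw [hY3def]
      dsimp only
      ring
    have habsw : |∑ i, σs m i * w m (dvec (cl m) x) i| ≤ M₃ * a m / Ybar := by
      rw [hZ3, abs_mul, abs_of_pos hYbar] at hx1
      rw [le_div_iff₀ hYbar]
      linarith
    have hsum : ∑ i, |μw m i| = (∑ i, σs m i * w m (dvec (cl m) x) i)
        - (∑ i, σs m i * (w m (dvec (cl m) x) i - μw m i)) := by
      rw [← Finset.sum_sub_distrib]
      refine Finset.sum_congr rfl fun i _ => ?_
      rw [hσdef]
      dsimp only
      split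
      · rename_i h; rw [abs_of_nonneg h]; ring
      · rename_i h; rw [abs_of_neg (lt_of_not_ge h)]; ring
    have hMa3 : M₃ * a m / Ybar ≤ M₃ / Ybar := by
      gcongr
      exact mul_le_of_le_one_right hM₃.le ha1.le
    calc ∑ i, |μw m i|
        = (∑ i, σs m i * w m (dvec (cl m) x) i)
          - (∑ i, σs m i * (w m (dvec (cl m) x) i - μw m i)) := hsum
      _ ≤ |∑ i, σs m i * w m (dvec (cl m) x) i|
          + |∑ i, σs m i * (w m (dvec (cl m) x) i - μw m i)| := habs2 _ _
      _ ≤ M₃ * a m / Ybar + 8 * (B0 + 1) := add_le_add habsw hx2.le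
      _ ≤ B' := by rw [hB'def]; linarith
  -- the treated-fraction processes and the deviation process W
  set Ffun : ∀ m : ℕ, Fin m → (Fin (C m) → Bool) → ℝ := fun m i x =>
    (∑ c ∈ Phiset (ρ m) (cl m) (sr m) i, if x c then (1:ℝ) else 0)
      / ((Phiset (ρ m) (cl m) (sr m) i).card : ℝ) with hFdef
  set Wfun : ∀ m : ℕ, (Fin (C m) → Bool) → ℝ := fun m x =>
    cval m * ∑ i ∈ Bset m, (Ffun m i x - p) * w m (dvec (cl m) x) i with hWdef
  have hYval : ∀ m (i : Fin m) (x : Fin (C m) → Bool),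
      Yf m i (dvec (cl m) x) = if i ∈ Bset m then cval m * Ffun m i x else 0 := by
    intro m i x
    rw [hYfdef]
    simp only [Yadv]
    split
    · have hterm : ∀ c ∈ Phiset (ρ m) (cl m) (sr m) i,
          (if dvec (cl m) x (repPick (ρ m) (cl m) (sr m) i c) = true then (1:ℝ) else 0)
          = (if x c = true then (1:ℝ) else 0) := by
        intro c hc
        have hcc := (repPick_spec hc).2
        simp only [dvec, hcc]
      rw [Finset.sum_congr rfl hterm, hFdef]
      dsimp only
      rw [← Phiset_card]
      ring
    · rfl
  have hageYf : ∀ m, age (Yf m) = cval m * β m := by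
    intro m
    simp only [age]
    have h1 : ∀ i : Fin m, Yf m i (fun _ => true) - Yf m i (fun _ => false)
        = if i ∈ Bset m then cval m else 0 := by
      intro i
      rw [hYfdef]
      show Yadv (ρ m) (cl m) (sr m) (cval m) (Bset m) i (fun _ => true)
        - Yadv (ρ m) (cl m) (sr m) (cval m) (Bset m) i (fun _ => false) = _
      rw [Yadv_true (hρ m) (cl m) (hspos m).le, Yadv_false, sub_zero]
    rw [Finset.sum_congr rfl fun i _ => h1 i, Finset.sum_ite_mem, Finset.univ_inter,
      Finset.sum_const, nsmul_eq_mul, hβdef]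
    dsimp only
    ring
  have hageYg : ∀ m, age (Yg m) = 0 := by
    intro m
    simp [age, hYgdef]
  have hWZ : ∀ m (x : Fin (C m) → Bool),
      Wfun m x = ((∑ i, Yf m i (dvec (cl m) x) * w m (dvec (cl m) x) i) - age (Yf m))
        - ((∑ i, Yg m i (dvec (cl m) x) * w m (dvec (cl m) x) i) - age (Yg m))
        + cval m * β m := by
    intro m x
    have h1 : (∑ i, Yf m i (dvec (cl m) x) * w m (dvec (cl m) x) i)
        = ∑ i ∈ Bset m, cval m * Ffun m i x * w m (dvec (cl m) x) i := by
      calc (∑ i, Yf m i (dvec (cl m) x) * w m (dvec (cl m) x) i)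
          = ∑ i : Fin m, (if i ∈ Bset m
              then cval m * Ffun m i x * w m (dvec (cl m) x) i else 0) := by
            refine Finset.sum_congr rfl fun i _ => ?_
            rw [hYval m i x, ite_mul, zero_mul]
        _ = _ := by rw [Finset.sum_ite_mem, Finset.univ_inter]
    have h2 : (∑ i, Yg m i (dvec (cl m) x) * w m (dvec (cl m) x) i)
        = ∑ i ∈ Bset m, cval m * p * w m (dvec (cl m) x) i := by
      calc (∑ i, Yg m i (dvec (cl m) x) * w m (dvec (cl m) x) i)
          = ∑ i : Fin m, (if i ∈ Bset m
              then cval m * p * w m (dvec (cl m) x) i else 0) := by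
            refine Finset.sum_congr rfl fun i _ => ?_
            rw [hYgdef]
            dsimp only
            rw [ite_mul, zero_mul]
        _ = _ := by rw [Finset.sum_ite_mem, Finset.univ_inter]
    have h3 : (∑ i ∈ Bset m, cval m * Ffun m i x * w m (dvec (cl m) x) i)
        - (∑ i ∈ Bset m, cval m * p * w m (dvec (cl m) x) i)
        = cval m * ∑ i ∈ Bset m, (Ffun m i x - p) * w m (dvec (cl m) x) i := by
      rw [Finset.mul_sum, ← Finset.sum_sub_distrib]
      exact Finset.sum_congr rfl fun i _ => by ring
    rw [hWdef]
    dsimp only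
    rw [h1, h2, hageYf m, hageYg m, sub_zero]
    linarith [h3]
  -- expectation bound for W
  have hEW : ∀ m, (∑ i, |μw m i| ≤ B') →
      ∫ x, |Wfun m x| ∂(designMeasure (C m) p)
        ≤ cval m * (Real.sqrt (a m ^ δ) * (B' + B0)) := by
    intro m hμB
    have hsqG : ∀ i ∈ Bset m,
        ∫ x, (Ffun m i x - p) ^ 2 ∂(designMeasure (C m) p) ≤ a m ^ δ := by
      intro i hi
      have hφpos : 0 < (Phiset (ρ m) (cl m) (sr m) i).card := by
        rw [Phiset_card]
        exact phi_pos (hρ m) (cl m) i (hspos m).le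
      have h1 := Gsq_moment (C m) hp0.le hp1.le (Phiset (ρ m) (cl m) (sr m) i) hφpos
      have h2 : 1 / ((Phiset (ρ m) (cl m) (sr m) i).card : ℝ) ≤ a m ^ δ := by
        have hτφ : τ m ≤ ((phi (ρ m) (cl m) i (sr m) : ℝ)) := by
          have := Finset.mem_filter.1 (by rw [hBsetdef] at hi; exact hi)
          exact this.2
        have h3 : 1 / ((phi (ρ m) (cl m) i (sr m) : ℝ)) ≤ 1 / τ m :=
          one_div_le_one_div_of_le (hτpos m) hτφ
        have h4 : 1 / τ m = a m ^ δ := by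
          rw [hτdef]
          dsimp only
          rw [Real.rpow_neg (hapos m).le, one_div, inv_inv]
        rw [Phiset_card]
        rw [h4] at h3
        exact h3
      refine le_trans ?_ h2
      rw [hFdef]
      exact h1
    have h0 : ∫ x, |Wfun m x| ∂(designMeasure (C m) p)
        = cval m * ∫ x, |∑ i ∈ Bset m, (Ffun m i x - p) * w m (dvec (cl m) x) i|
            ∂(designMeasure (C m) p) := by
      rw [← integral_const_mul]
      refine integral_congr_ae (Filter.Eventually.of_forall fun x => ?_)
      rw [hWdef]
      dsimp only
      rw [abs_mul, abs_of_pos (hcpos m)]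
    rw [h0]
    refine mul_le_mul_of_nonneg_left ?_ (hcpos m).le
    have hterm : ∀ i ∈ Bset m,
        ∫ x, |(Ffun m i x - p) * w m (dvec (cl m) x) i| ∂(designMeasure (C m) p)
          ≤ Real.sqrt (a m ^ δ) * |μw m i|
            + Real.sqrt (a m ^ δ)
              * Real.sqrt (variance (fun x => w m (dvec (cl m) x) i)
                  (designMeasure (C m) p)) := by
      intro i hi
      have hFi : Real.sqrt (∫ x, (Ffun m i x - p) ^ 2 ∂(designMeasure (C m) p))
          ≤ Real.sqrt (a m ^ δ) := Real.sqrt_le_sqrt (hsqG i hi)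
      have hFnn : 0 ≤ Real.sqrt (∫ x, (Ffun m i x - p) ^ 2 ∂(designMeasure (C m) p)) :=
        Real.sqrt_nonneg _
      have hsplit : ∫ x, |(Ffun m i x - p) * w m (dvec (cl m) x) i| ∂(designMeasure (C m) p)
          ≤ (∫ x, |(Ffun m i x - p) * μw m i| ∂(designMeasure (C m) p))
            + ∫ x, |(Ffun m i x - p) * (w m (dvec (cl m) x) i - μw m i)|
                ∂(designMeasure (C m) p) := by
        rw [← integral_add Integrable.of_finite Integrable.of_finite]
        refine integral_mono Integrable.of_finite Integrable.of_finite fun x => ?_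
        have hdec : (Ffun m i x - p) * w m (dvec (cl m) x) i
            = (Ffun m i x - p) * μw m i
              + (Ffun m i x - p) * (w m (dvec (cl m) x) i - μw m i) := by ring
        calc |(Ffun m i x - p) * w m (dvec (cl m) x) i|
            = |(Ffun m i x - p) * μw m i
                + (Ffun m i x - p) * (w m (dvec (cl m) x) i - μw m i)| := by rw [← hdec]
          _ ≤ _ := abs_add_le _ _
      have hpart1 : ∫ x, |(Ffun m i x - p) * μw m i| ∂(designMeasure (C m) p)
          ≤ Real.sqrt (a m ^ δ) * |μw m i| := by
        have he : ∀ x : Fin (C m) → Bool,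
            |(Ffun m i x - p) * μw m i| = |Ffun m i x - p| * |μw m i| :=
          fun x => abs_mul _ _
        rw [integral_congr_ae (Filter.Eventually.of_forall he), integral_mul_const]
        refine mul_le_mul_of_nonneg_right ?_ (abs_nonneg _)
        exact le_trans (int_abs_le_sqrt _ (fun x => Ffun m i x - p)) hFi
      have hpart2 : ∫ x, |(Ffun m i x - p) * (w m (dvec (cl m) x) i - μw m i)|
            ∂(designMeasure (C m) p)
          ≤ Real.sqrt (a m ^ δ)
            * Real.sqrt (variance (fun x => w m (dvec (cl m) x) i)
                (designMeasure (C m) p)) := by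
        have h5 := int_abs_mul_le (designMeasure (C m) p)
          (fun x => Ffun m i x - p) (fun x => w m (dvec (cl m) x) i - μw m i)
        rw [hvar m i] at h5
        exact le_trans h5 (mul_le_mul_of_nonneg_right hFi (Real.sqrt_nonneg _))
      linarith
    calc ∫ x, |∑ i ∈ Bset m, (Ffun m i x - p) * w m (dvec (cl m) x) i|
          ∂(designMeasure (C m) p)
        ≤ ∫ x, ∑ i ∈ Bset m, |(Ffun m i x - p) * w m (dvec (cl m) x) i|
            ∂(designMeasure (C m) p) :=
          integral_mono Integrable.of_finite Integrable.of_finite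
            fun x => Finset.abs_sum_le_sum_abs _ _
      _ = ∑ i ∈ Bset m, ∫ x, |(Ffun m i x - p) * w m (dvec (cl m) x) i|
            ∂(designMeasure (C m) p) :=
          integral_finset_sum _ fun i _ => Integrable.of_finite
      _ ≤ ∑ i ∈ Bset m, (Real.sqrt (a m ^ δ) * |μw m i|
            + Real.sqrt (a m ^ δ)
              * Real.sqrt (variance (fun x => w m (dvec (cl m) x) i)
                  (designMeasure (C m) p))) := Finset.sum_le_sum hterm
      _ = Real.sqrt (a m ^ δ) * ((∑ i ∈ Bset m, |μw m i|)
            + ∑ i ∈ Bset m, Real.sqrt (variance (fun x => w m (dvec (cl m) x) i)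
                (designMeasure (C m) p))) := by
          rw [Finset.sum_add_distrib, ← Finset.mul_sum, ← Finset.mul_sum, ← mul_add]
      _ ≤ Real.sqrt (a m ^ δ) * (B' + B0) := by
          refine mul_le_mul_of_nonneg_left (add_le_add ?_ ?_) (Real.sqrt_nonneg _)
          · exact le_trans (Finset.sum_le_sum_of_subset_of_nonneg
              (Finset.subset_univ _) fun i _ _ => abs_nonneg _) hμB
          · exact le_trans (Finset.sum_le_sum_of_subset_of_nonneg
              (Finset.subset_univ _) fun i _ _ => Real.sqrt_nonneg _) (hwB m)
  -- remaining eventualities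
  set M : ℝ := max M₁ M₂ with hMdef
  have hMpos : 0 < M := lt_of_lt_of_le hM₁ (le_max_left _ _)
  have hB'0 : 0 ≤ B' := by
    rw [hB'def]
    have : 0 ≤ M₃ / Ybar := div_nonneg hM₃.le hYbar.le
    linarith
  have hevMa : ∀ᶠ m in Filter.atTop, M * a m ≤ cval m * (r / 4) := by
    have htε : Filter.Tendsto (fun m => a m ^ (ε * η)) Filter.atTop (𝓝 0) := by
      have hc : ContinuousAt (fun x : ℝ => x ^ (ε * η)) 0 :=
        Real.continuousAt_rpow_const 0 _ (Or.inr hεηpos.le)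
      have := hc.tendsto.comp ha0
      simpa [Function.comp_def, Real.zero_rpow hεηpos.ne'] using this
    have h1 : ∀ᶠ m in Filter.atTop, a m ^ (ε * η) < K₁ * r / (4 * M) :=
      htε.eventually (gt_mem_nhds (by positivity))
    have h2 : ∀ᶠ m in Filter.atTop, a m < Ybar * r / (4 * M) :=
      ha0.eventually (gt_mem_nhds (by positivity))
    filter_upwards [h1, h2] with m hm1 hm2
    have hma : M * a m ≤ K₁ * a m ^ (1 - ε * η) * (r / 4) := by
      have ha' : a m = a m ^ (ε * η) * a m ^ (1 - ε * η) := by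
        rw [← Real.rpow_add (hapos m)]
        norm_num
      calc M * a m = a m ^ (ε * η) * (M * a m ^ (1 - ε * η)) := by
            conv_lhs => rw [ha']
            ring
        _ ≤ (K₁ * r / (4 * M)) * (M * a m ^ (1 - ε * η)) := by
            refine mul_le_mul_of_nonneg_right hm1.le
              (mul_nonneg hMpos.le (Real.rpow_pos_of_pos (hapos m) _).le)
        _ = K₁ * a m ^ (1 - ε * η) * (r / 4) := by
            field_simp
    have hmb : M * a m ≤ Ybar * (r / 4) := by
      calc M * a m ≤ M * (Ybar * r / (4 * M)) :=
          mul_le_mul_of_nonneg_left hm2.le hMpos.le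
        _ = Ybar * (r / 4) := by field_simp
    rw [hcdef]
    dsimp only
    rw [min_mul_of_nonneg _ _ (by positivity : (0:ℝ) ≤ r / 4)]
    exact le_min hma hmb
  have hev6 : ∀ᶠ m in Filter.atTop, Real.sqrt (a m ^ δ) * (B' + B0) < r / 4 := by
    have htδ : Filter.Tendsto (fun m => Real.sqrt (a m ^ δ)) Filter.atTop (𝓝 0) := by
      have hc1 : ContinuousAt (fun x : ℝ => x ^ δ) 0 :=
        Real.continuousAt_rpow_const 0 _ (Or.inr hδ.le)
      have h1 : Filter.Tendsto (fun m => a m ^ δ) Filter.atTop (𝓝 0) := by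
        have := hc1.tendsto.comp ha0
        simpa [Function.comp_def, Real.zero_rpow hδ.ne'] using this
      have := (Real.continuous_sqrt.continuousAt (x := (0:ℝ))).tendsto.comp h1
      simpa [Function.comp_def] using this
    have := htδ.mul_const (B' + B0)
    rw [zero_mul] at this
    exact this.eventually (gt_mem_nhds (by positivity))
  -- pick a bad population size
  obtain ⟨m, hβm, hP₁, hP₂, hμB, hMa, h6⟩ :=
    (hfreq.and_eventually (hev₁.and (hev₂.and (hevB'.and (hevMa.and hev6))))).exists
  -- on the good event, W is large
  have hsub : ({x | M₁ * a m <
        |(∑ i, Yf m i (dvec (cl m) x) * w m (dvec (cl m) x) i) - age (Yf m)|}ᶜ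
      ∩ {x | M₂ * a m <
        |(∑ i, Yg m i (dvec (cl m) x) * w m (dvec (cl m) x) i) - age (Yg m)|}ᶜ)
      ⊆ {x | cval m * r / 2 ≤ |Wfun m x|} := by
    rintro x ⟨hx1, hx2⟩
    simp only [Set.mem_compl_iff, Set.mem_setOf_eq, not_lt] at hx1 hx2
    have hZ1 : |(∑ i, Yf m i (dvec (cl m) x) * w m (dvec (cl m) x) i) - age (Yf m)|
        ≤ cval m * (r / 4) := by
      refine le_trans (le_trans hx1 ?_) hMa
      exact mul_le_mul_of_nonneg_right (le_max_left _ _) (hapos m).le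
    have hZ2 : |(∑ i, Yg m i (dvec (cl m) x) * w m (dvec (cl m) x) i) - age (Yg m)|
        ≤ cval m * (r / 4) := by
      refine le_trans (le_trans hx2 ?_) hMa
      exact mul_le_mul_of_nonneg_right (le_max_right _ _) (hapos m).le
    have hcβ : cval m * r ≤ cval m * β m := mul_le_mul_of_nonneg_left hβm (hcpos m).le
    have hW := hWZ m x
    set u := (∑ i, Yf m i (dvec (cl m) x) * w m (dvec (cl m) x) i) - age (Yf m) with hu
    set v := (∑ i, Yg m i (dvec (cl m) x) * w m (dvec (cl m) x) i) - age (Yg m) with hv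
    have htri : cval m * β m - |u| - |v| ≤ |u - v + cval m * β m| := by
      have h1 : |cval m * β m| ≤ |u - v + cval m * β m| + |u - v| := by
        have h0 : u - v + cval m * β m + -(u - v) = cval m * β m := by ring
        have ha := abs_add_le (u - v + cval m * β m) (-(u - v))
        rw [h0, abs_neg] at ha
        exact ha
      have h2 : |u - v| ≤ |u| + |v| := by
        rw [sub_eq_add_neg]
        exact (abs_add_le _ _).trans (by rw [abs_neg])
      have h3 : cval m * β m ≤ |cval m * β m| := le_abs_self _
      linarith
    show cval m * r / 2 ≤ |Wfun m x|
    rw [hW]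
    calc cval m * r / 2 = cval m * r - cval m * (r / 4) - cval m * (r / 4) := by ring
      _ ≤ cval m * β m - |u| - |v| := by linarith
      _ ≤ |u - v + cval m * β m| := htri
  have hge := prob_inter_ge (designMeasure (C m) p)
    {x | M₁ * a m <
      |(∑ i, Yf m i (dvec (cl m) x) * w m (dvec (cl m) x) i) - age (Yf m)|}ᶜ
    {x | M₂ * a m <
      |(∑ i, Yg m i (dvec (cl m) x) * w m (dvec (cl m) x) i) - age (Yg m)|}ᶜ
  rw [compl_compl, compl_compl] at hge
  have h5 : 1/2 < ((designMeasure (C m) p)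
      ({x | M₁ * a m <
        |(∑ i, Yf m i (dvec (cl m) x) * w m (dvec (cl m) x) i) - age (Yf m)|}ᶜ
      ∩ {x | M₂ * a m <
        |(∑ i, Yg m i (dvec (cl m) x) * w m (dvec (cl m) x) i) - age (Yg m)|}ᶜ)).toReal := by
    linarith
  have h7 := meas_toReal_mono (designMeasure (C m) p) hsub
  have hpos2 : 0 < cval m * r / 2 := div_pos (mul_pos (hcpos m) hr) two_pos
  have h8 := markov_fin (designMeasure (C m) p) (Wfun m)
    (t := cval m * r / 2) hpos2
  have h9 := hEW m hμB
  have h10 : (∫ x, |Wfun m x| ∂(designMeasure (C m) p)) / (cval m * r / 2)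
      ≤ (cval m * (Real.sqrt (a m ^ δ) * (B' + B0))) / (cval m * r / 2) :=
    (div_le_div_iff_of_pos_right hpos2).2 h9
  have h11 : (cval m * (Real.sqrt (a m ^ δ) * (B' + B0))) / (cval m * r / 2)
      = Real.sqrt (a m ^ δ) * (B' + B0) * 2 / r := by
    field_simp [(hcpos m).ne']
  have h12 : Real.sqrt (a m ^ δ) * (B' + B0) * 2 / r < 1/2 := by
    rw [div_lt_iff₀ hr]
    nlinarith
  have h13 : ((designMeasure (C m) p) {x | cval m * r / 2 ≤ |Wfun m x|}).toReal < 1/2 := by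
    calc ((designMeasure (C m) p) {x | cval m * r / 2 ≤ |Wfun m x|}).toReal
        ≤ (∫ x, |Wfun m x| ∂(designMeasure (C m) p)) / (cval m * r / 2) := h8
      _ ≤ (cval m * (Real.sqrt (a m ^ δ) * (B' + B0))) / (cval m * r / 2) := h10
      _ = Real.sqrt (a m ^ δ) * (B' + B0) * 2 / r := h11
      _ < 1/2 := h12
  linarith

end AGEPaper
end
end

section
/- Under a cluster-randomized design with parameter p ∈ (0,1) and bounded outcomes |Y_i(d)| ≤ Ȳ, the oracle estimator θ̃_{n,κ} = (1/n)·Σ_i [ Y_i(𝟏)·T_{i1}/p^{φ_n(i,κ)} − Y_i(𝟎)·T_{i0}/(1−p)^{φ_n(i,κ)} ] has variance bounded by Var(θ̃_{n,κ}) ≤ Ȳ²·Σ_{c=1}^{C_n} γ_n(c,κ)² / ( n²·(p(1−p))^{2φ_n(κ)} ). -/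
open MeasureTheory ProbabilityTheory Filter
open scoped ENNReal NNReal BigOperators Classical Topology

noncomputable section

namespace AGEPaper

variable {n C : ℕ}

section AuxVariance

variable {Cx : ℕ}

lemma bern_singleton {p : ℝ} (hp0 : 0 ≤ p) (hp1 : p ≤ 1) (b : Bool) :
    (bern p {b}).toReal = if b then p else 1 - p := by
  rw [bern, PMF.toMeasure_apply_singleton _ b (measurableSet_singleton b)]
  have hmin : min (Real.toNNReal p) 1 = Real.toNNReal p :=
    min_eq_left (Real.toNNReal_le_one.mpr hp1)
  rw [PMF.bernoulli_apply, hmin]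
  cases b with
  | true => simp [hp0]
  | false =>
    simp only [Bool.cond_false, if_false, ENNReal.coe_toReal]
    rw [NNReal.coe_sub (Real.toNNReal_le_one.mpr hp1), Real.coe_toNNReal _ hp0]
    simp

lemma design_singleton (p : ℝ) (x : Fin Cx → Bool) :
    designMeasure Cx p {x} = ∏ c, bern p {x c} := by
  rw [← Set.univ_pi_singleton x]
  exact Measure.pi_pi _ _

lemma integral_design (p : ℝ) (f : (Fin Cx → Bool) → ℝ) :
    ∫ x, f x ∂(designMeasure Cx p) =
      ∑ x : Fin Cx → Bool, ((designMeasure Cx p) {x}).toReal * f x := by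
  rw [integral_fintype (Integrable.of_finite)]
  simp only [smul_eq_mul, Measure.real]

lemma sum_factor (wb : Fin Cx → Bool → ℝ) (hwb : ∀ c, wb c true + wb c false = 1)
    (f g : (Fin Cx → Bool) → ℝ) (S : Finset (Fin Cx))
    (hf : ∀ x y : Fin Cx → Bool, (∀ c ∈ S, x c = y c) → f x = f y)
    (hg : ∀ x y : Fin Cx → Bool, (∀ c ∉ S, x c = y c) → g x = g y) :
    (∑ x : Fin Cx → Bool, (∏ c, wb c (x c)) * (f x * g x)) =
      (∑ x : Fin Cx → Bool, (∏ c, wb c (x c)) * f x) *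
        (∑ x : Fin Cx → Bool, (∏ c, wb c (x c)) * g x) := by
  classical
  set e := (Equiv.piEquivPiSubtypeProd (fun c : Fin Cx => c ∈ S) (fun _ => Bool)).symm with he
  set P : ({ c : Fin Cx // c ∈ S } → Bool) → ℝ := fun y => ∏ c, wb c.1 (y c) with hP
  set Q : ({ c : Fin Cx // ¬ c ∈ S } → Bool) → ℝ := fun z => ∏ c, wb c.1 (z c) with hQ
  set F : ({ c : Fin Cx // c ∈ S } → Bool) → ℝ :=
    fun y => f (e (y, fun _ => false)) with hF
  set G : ({ c : Fin Cx // ¬ c ∈ S } → Bool) → ℝ :=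
    fun z => g (e (fun _ => false, z)) with hG
  have hw0 : ∀ x : Fin Cx → Bool, (∏ c, wb c (x c)) =
      (∏ c : { c : Fin Cx // c ∈ S }, wb c.1 (x c.1)) *
        ∏ c : { c : Fin Cx // ¬ c ∈ S }, wb c.1 (x c.1) := by
    intro x
    rw [← Finset.prod_mul_prod_compl S (fun c => wb c (x c))]
    congr 1
    · exact Finset.prod_subtype S (fun c => Iff.rfl) (fun c => wb c (x c))
    · exact Finset.prod_subtype Sᶜ (fun c => Finset.mem_compl) (fun c => wb c (x c))
  have hw : ∀ yz : ({ c : Fin Cx // c ∈ S } → Bool) × ({ c : Fin Cx // ¬ c ∈ S } → Bool),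
      (∏ c, wb c (e yz c)) = P yz.1 * Q yz.2 := by
    intro yz
    rw [hw0 (e yz), hP, hQ]
    congr 1
    · exact Finset.prod_congr rfl fun c _ => by
        simp [he, Equiv.piEquivPiSubtypeProd_symm_apply, c.2]
    · exact Finset.prod_congr rfl fun c _ => by
        simp [he, Equiv.piEquivPiSubtypeProd_symm_apply, c.2]
  have hfe : ∀ yz : ({ c : Fin Cx // c ∈ S } → Bool) × ({ c : Fin Cx // ¬ c ∈ S } → Bool),
      f (e yz) = F yz.1 := by
    intro yz
    rw [hF]
    apply hf
    intro c hc
    simp [he, Equiv.piEquivPiSubtypeProd_symm_apply, hc]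
  have hge : ∀ yz : ({ c : Fin Cx // c ∈ S } → Bool) × ({ c : Fin Cx // ¬ c ∈ S } → Bool),
      g (e yz) = G yz.2 := by
    intro yz
    rw [hG]
    apply hg
    intro c hc
    simp [he, Equiv.piEquivPiSubtypeProd_symm_apply, hc]
  have hPsum : ∑ y, P y = 1 := by
    rw [hP, ← Fintype.prod_sum (fun (c : { c : Fin Cx // c ∈ S }) (b : Bool) => wb c.1 b)]
    refine Finset.prod_eq_one fun c _ => ?_
    rw [Fintype.sum_bool]
    exact hwb c.1
  have hQsum : ∑ z, Q z = 1 := by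
    rw [hQ, ← Fintype.prod_sum (fun (c : { c : Fin Cx // ¬ c ∈ S }) (b : Bool) => wb c.1 b)]
    refine Finset.prod_eq_one fun c _ => ?_
    rw [Fintype.sum_bool]
    exact hwb c.1
  have key : ∀ h : (Fin Cx → Bool) → ℝ,
      (∑ x : Fin Cx → Bool, (∏ c, wb c (x c)) * h x) =
      ∑ yz : ({ c : Fin Cx // c ∈ S } → Bool) × ({ c : Fin Cx // ¬ c ∈ S } → Bool),
        (P yz.1 * Q yz.2) * h (e yz) := by
    intro h
    rw [← Equiv.sum_comp e (fun x => (∏ c, wb c (x c)) * h x)]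
    exact Finset.sum_congr rfl fun yz _ => by rw [hw]
  rw [key, key, key]
  have lhs_eq :
      (∑ yz : ({ c : Fin Cx // c ∈ S } → Bool) × ({ c : Fin Cx // ¬ c ∈ S } → Bool),
        (P yz.1 * Q yz.2) * (fun x => f x * g x) (e yz)) =
      (∑ y, P y * F y) * (∑ z, Q z * G z) := by
    rw [Fintype.sum_mul_sum]
    rw [Fintype.sum_prod_type]
    refine Finset.sum_congr rfl fun y _ => Finset.sum_congr rfl fun z _ => ?_
    have h1 : f (e (y, z)) = F y := hfe (y, z)
    have h2 : g (e (y, z)) = G z := hge (y, z)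
    simp only []
    rw [h1, h2]
    ring
  have rhs_f :
      (∑ yz : ({ c : Fin Cx // c ∈ S } → Bool) × ({ c : Fin Cx // ¬ c ∈ S } → Bool),
        (P yz.1 * Q yz.2) * f (e yz)) = ∑ y, P y * F y := by
    rw [Fintype.sum_prod_type]
    have : ∀ y, (∑ z, (P y * Q z) * f (e (y, z))) = (P y * F y) * ∑ z, Q z := by
      intro y
      rw [Finset.mul_sum]
      refine Finset.sum_congr rfl fun z _ => ?_
      rw [hfe (y, z)]
      ring
    simp_rw [this, hQsum, mul_one]
  have rhs_g :
      (∑ yz : ({ c : Fin Cx // c ∈ S } → Bool) × ({ c : Fin Cx // ¬ c ∈ S } → Bool),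
        (P yz.1 * Q yz.2) * g (e yz)) = ∑ z, Q z * G z := by
    rw [Fintype.sum_prod_type_right]
    have : ∀ z, (∑ y, (P y * Q z) * g (e (y, z))) = (Q z * G z) * ∑ y, P y := by
      intro z
      rw [Finset.mul_sum]
      refine Finset.sum_congr rfl fun y _ => ?_
      rw [hge (y, z)]
      ring
    simp_rw [this, hPsum, mul_one]
  rw [lhs_eq, rhs_f, rhs_g]

lemma integral_mul_of_disjoint {p : ℝ} (hp0 : 0 ≤ p) (hp1 : p ≤ 1)
    (f g : (Fin Cx → Bool) → ℝ) (S : Finset (Fin Cx))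
    (hf : ∀ x y : Fin Cx → Bool, (∀ c ∈ S, x c = y c) → f x = f y)
    (hg : ∀ x y : Fin Cx → Bool, (∀ c ∉ S, x c = y c) → g x = g y) :
    ∫ x, f x * g x ∂(designMeasure Cx p) =
      (∫ x, f x ∂(designMeasure Cx p)) * ∫ x, g x ∂(designMeasure Cx p) := by
  have hw : ∀ x : Fin Cx → Bool,
      ((designMeasure Cx p) {x}).toReal = ∏ c, (if x c then p else 1 - p) := by
    intro x
    rw [design_singleton, ENNReal.toReal_prod]
    exact Finset.prod_congr rfl fun c _ => bern_singleton hp0 hp1 (x c)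
  rw [integral_design, integral_design, integral_design]
  simp_rw [hw]
  exact sum_factor (fun _ b => if b then p else 1 - p)
    (fun c => by simp) f g S hf hg

end AuxVariance

/-- variance bound for the oracle estimator under a cluster-randomized
design with bounded outcomes. -/
theorem oracle_variance_bound
    (m Cm : ℕ) (hm : 0 < m)
    (ρ : Fin m → Fin m → ℝ) (hρ : DistOK ρ)
    (cl : Fin m → Fin Cm)
    (Y : Fin m → (Fin m → Bool) → ℝ)
    (Ybar : ℝ) (hYbar : 0 < Ybar)
    (hbd : ∀ (i : Fin m) (d : Fin m → Bool), |Y i d| ≤ Ybar)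
    (p κ : ℝ) (hp0 : 0 < p) (hp1 : p < 1) :
    variance (oracle ρ cl p κ Y) (designMeasure Cm p) ≤
      Ybar ^ 2 * (∑ c : Fin Cm, ((gam ρ cl c κ : ℝ)) ^ 2) /
        ((m : ℝ) ^ 2 * (p * (1 - p)) ^ (2 * phiMax ρ cl κ)) := by
  classical
  have hq0 : (0:ℝ) < 1 - p := by linarith
  set Φ : ℕ := phiMax ρ cl κ with hΦ
  set W : Fin m → (Fin Cm → Bool) → ℝ := fun i x =>
    Y i (fun _ => true) * Tind ρ cl κ i true x / p ^ phi ρ cl i κ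
      - Y i (fun _ => false) * Tind ρ cl κ i false x / (1 - p) ^ phi ρ cl i κ with hW
  set B : ℝ := Ybar / (p * (1 - p)) ^ Φ with hB
  have hpqpos : (0:ℝ) < (p * (1 - p)) ^ Φ := pow_pos (mul_pos hp0 hq0) _
  have hBpos : 0 < B := div_pos hYbar hpqpos
  set S : Fin m → Finset (Fin Cm) :=
    fun i => Finset.univ.filter fun c => ∃ j ∈ nbhd ρ i κ, cl j = c with hS
  have hInt : ∀ f : (Fin Cm → Bool) → ℝ, Integrable f (designMeasure Cm p) :=
    fun f => .of_finite
  -- `W i` depends only on coordinates in `S i`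
  have hdep : ∀ i (x y : Fin Cm → Bool), (∀ c ∈ S i, x c = y c) → W i x = W i y := by
    intro i x y hxy
    have hcl : ∀ j ∈ nbhd ρ i κ, cl j ∈ S i := by
      intro j hj
      rw [hS]
      exact Finset.mem_filter.mpr ⟨Finset.mem_univ _, ⟨j, hj, rfl⟩⟩
    have hT : ∀ t, Tind ρ cl κ i t x = Tind ρ cl κ i t y := by
      intro t
      have hiff : allTreat ρ cl κ i t x ↔ allTreat ρ cl κ i t y := by
        constructor
        · intro h j hj; rw [← hxy _ (hcl j hj)]; exact h j hj
        · intro h j hj; rw [hxy _ (hcl j hj)]; exact h j hj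
      simp only [Tind]
      by_cases hx : allTreat ρ cl κ i t x
      · rw [if_pos hx, if_pos (hiff.mp hx)]
      · rw [if_neg hx, if_neg fun hy => hx (hiff.mpr hy)]
    simp only [hW, hT]
  -- pointwise bound when the neighborhood is nonempty
  have hWbd : ∀ i : Fin m, (nbhd ρ i κ).Nonempty → ∀ x, |W i x| ≤ B := by
    intro i hne x
    obtain ⟨j0, hj0⟩ := hne
    have hφ : phi ρ cl i κ ≤ Φ := by
      rw [hΦ]
      simp only [phiMax]
      exact Finset.le_sup (f := fun k : Fin m => phi ρ cl k κ) (Finset.mem_univ i)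
    have hpq1 : p * (1 - p) ≤ 1 := by nlinarith
    have hpq0 : (0:ℝ) ≤ p * (1 - p) := by positivity
    have hple : (p * (1 - p)) ^ Φ ≤ p ^ phi ρ cl i κ :=
      le_trans (pow_le_pow_of_le_one hpq0 hpq1 hφ)
        (pow_le_pow_left₀ hpq0 (by nlinarith) _)
    have hqle : (p * (1 - p)) ^ Φ ≤ (1 - p) ^ phi ρ cl i κ :=
      le_trans (pow_le_pow_of_le_one hpq0 hpq1 hφ)
        (pow_le_pow_left₀ hpq0 (by nlinarith) _)
    by_cases h1 : allTreat ρ cl κ i true x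
    · have h0 : ¬ allTreat ρ cl κ i false x := by
        intro h0
        have e1 := h1 j0 hj0
        have e0 := h0 j0 hj0
        rw [e1] at e0
        exact Bool.noConfusion e0
      simp only [hW, Tind, if_pos h1, if_neg h0, mul_one, mul_zero, zero_div, sub_zero]
      rw [abs_div, abs_of_pos (pow_pos hp0 _), hB]
      exact div_le_div₀ hYbar.le (hbd i _) hpqpos hple
    · by_cases h0 : allTreat ρ cl κ i false x
      · simp only [hW, Tind, if_pos h0, if_neg h1, mul_one, mul_zero, zero_div,
          zero_sub, abs_neg]
        rw [abs_div, abs_of_pos (pow_pos hq0 _), hB]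
        exact div_le_div₀ hYbar.le (hbd i _) hpqpos hqle
      · simp only [hW, Tind, if_neg h1, if_neg h0, mul_zero, zero_div, sub_zero, abs_zero]
        exact hBpos.le
  -- integral expansion helper
  have expand : ∀ (u v : (Fin Cm → Bool) → ℝ) (a b : ℝ),
      ∫ x, (u x - a) * (v x - b) ∂(designMeasure Cm p) =
        (∫ x, u x * v x ∂(designMeasure Cm p)) - a * (∫ x, v x ∂(designMeasure Cm p))
          - b * (∫ x, u x ∂(designMeasure Cm p)) + a * b := by
    intro u v a b
    have heq : (fun x : Fin Cm → Bool => (u x - a) * (v x - b)) =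
        fun x => (u x * v x - a * v x - b * u x) + a * b := by
      funext x; ring
    rw [heq,
      integral_add (f := fun x => u x * v x - a * v x - b * u x)
        (g := fun _ => a * b) (hInt _) (hInt _),
      integral_sub (f := fun x => u x * v x - a * v x)
        (g := fun x => b * u x) (hInt _) (hInt _),
      integral_sub (f := fun x => u x * v x)
        (g := fun x => a * v x) (hInt _) (hInt _),
      integral_const_mul, integral_const_mul, integral_const]
    simp [measure_univ]
  -- zero covariance for disjoint cluster sets
  have hcov0 : ∀ i j : Fin m, Disjoint (S i) (S j) →
      (∫ x, W i x * W j x ∂(designMeasure Cm p))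
        - (∫ x, W i x ∂(designMeasure Cm p)) * ∫ x, W j x ∂(designMeasure Cm p) = 0 := by
    intro i j hdisj
    rw [integral_mul_of_disjoint hp0.le hp1.le (W i) (W j) (S i) (hdep i)
      (fun x y hxy => hdep j x y fun c hc =>
        hxy c fun hcS => Finset.disjoint_left.mp hdisj hcS hc)]
    ring
  -- second moment bounds
  have hWsq : ∀ k : Fin m, (nbhd ρ k κ).Nonempty →
      ∫ x, W k x * W k x ∂(designMeasure Cm p) ≤ B ^ 2 := by
    intro k hk
    calc ∫ x, W k x * W k x ∂(designMeasure Cm p)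
        ≤ ∫ _x, B ^ 2 ∂(designMeasure Cm p) := by
          refine integral_mono (hInt _) (integrable_const _) fun x => ?_
          have h := hWbd k hk x
          nlinarith [abs_mul_abs_self (W k x), abs_nonneg (W k x)]
      _ = B ^ 2 := by simp [measure_univ]
  have hZsq : ∀ k : Fin m, (nbhd ρ k κ).Nonempty →
      ∫ x, (W k x - ∫ x, W k x ∂(designMeasure Cm p))
          * (W k x - ∫ x, W k x ∂(designMeasure Cm p)) ∂(designMeasure Cm p) ≤ B ^ 2 := by
    intro k hk
    rw [expand]
    have h1 := hWsq k hk
    nlinarith [mul_self_nonneg (∫ x, W k x ∂(designMeasure Cm p))]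
  -- per-pair covariance bound
  have hpair : ∀ i j : Fin m,
      (∫ x, W i x * W j x ∂(designMeasure Cm p))
          - (∫ x, W i x ∂(designMeasure Cm p)) * ∫ x, W j x ∂(designMeasure Cm p) ≤
        if Disjoint (S i) (S j) then 0 else B ^ 2 := by
    intro i j
    by_cases hd : Disjoint (S i) (S j)
    · rw [if_pos hd]
      exact le_of_eq (hcov0 i j hd)
    · rw [if_neg hd]
      obtain ⟨c, hci, hcj⟩ := Finset.not_disjoint_iff.mp hd
      have hnei : (nbhd ρ i κ).Nonempty := by
        rw [hS] at hci
        obtain ⟨j', hj', -⟩ := (Finset.mem_filter.mp hci).2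
        exact ⟨j', hj'⟩
      have hnej : (nbhd ρ j κ).Nonempty := by
        rw [hS] at hcj
        obtain ⟨j', hj', -⟩ := (Finset.mem_filter.mp hcj).2
        exact ⟨j', hj'⟩
      have hc1 : (∫ x, W i x * W j x ∂(designMeasure Cm p))
            - (∫ x, W i x ∂(designMeasure Cm p)) * ∫ x, W j x ∂(designMeasure Cm p)
          = ∫ x, (W i x - ∫ x, W i x ∂(designMeasure Cm p))
              * (W j x - ∫ x, W j x ∂(designMeasure Cm p)) ∂(designMeasure Cm p) := by
        rw [expand]; ring
      rw [hc1]
      have hmono : ∫ x, (W i x - ∫ x, W i x ∂(designMeasure Cm p))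
            * (W j x - ∫ x, W j x ∂(designMeasure Cm p)) ∂(designMeasure Cm p) ≤
          ∫ x, ((W i x - ∫ x, W i x ∂(designMeasure Cm p))
              * (W i x - ∫ x, W i x ∂(designMeasure Cm p))
            + (W j x - ∫ x, W j x ∂(designMeasure Cm p))
              * (W j x - ∫ x, W j x ∂(designMeasure Cm p))) / 2 ∂(designMeasure Cm p) := by
        have amgm : ∀ a b : ℝ, a * b ≤ (a * a + b * b) / 2 := fun a b => by
          nlinarith [sq_nonneg (a - b)]
        exact integral_mono (hInt _) (hInt _) fun x => amgm _ _
      refine le_trans hmono ?_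
      rw [integral_div, integral_add (hInt _) (hInt _)]
      have h1 := hZsq i hnei
      have h2 := hZsq j hnej
      linarith
  -- variance expansion
  have hT2 : MemLp (fun x => ∑ i, W i x) 2 (designMeasure Cm p) := .of_discrete
  have hvar : variance (fun x => ∑ i, W i x) (designMeasure Cm p) =
      ∑ i, ∑ j, ((∫ x, W i x * W j x ∂(designMeasure Cm p))
        - (∫ x, W i x ∂(designMeasure Cm p)) * ∫ x, W j x ∂(designMeasure Cm p)) := by
    rw [variance_eq_sub hT2]
    have h1 : ((fun x : Fin Cm → Bool => ∑ i, W i x) ^ 2) =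
        fun x => ∑ i, ∑ j, W i x * W j x := by
      funext x
      simp only [Pi.pow_apply]
      rw [pow_two, Finset.sum_mul_sum]
    have h2 : (designMeasure Cm p)[(fun x : Fin Cm → Bool => ∑ i, W i x) ^ 2] =
        ∑ i, ∑ j, ∫ x, W i x * W j x ∂(designMeasure Cm p) := by
      rw [h1, integral_finset_sum _ fun i _ => hInt _]
      exact Finset.sum_congr rfl fun i _ => integral_finset_sum _ fun j _ => hInt _
    have h3 : (designMeasure Cm p)[fun x : Fin Cm → Bool => ∑ i, W i x] =
        ∑ i, ∫ x, W i x ∂(designMeasure Cm p) :=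
      integral_finset_sum _ fun i _ => hInt _
    rw [h2, h3, pow_two, Finset.sum_mul_sum, ← Finset.sum_sub_distrib]
    exact Finset.sum_congr rfl fun i _ => (Finset.sum_sub_distrib ..).symm
  -- oracle as a scalar multiple of the sum
  have horacle : oracle ρ cl p κ Y = ((m:ℝ)⁻¹) • fun x => ∑ i, W i x := by
    funext x
    simp only [oracle, hW, Pi.smul_apply, smul_eq_mul]
    rw [div_eq_inv_mul]
  -- the double sum bound
  have hind : ∀ (P : Prop) [Decidable P], (0:ℝ) ≤ if P then 1 else 0 := by
    intro P _; split <;> norm_num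
  have hsum : (∑ i, ∑ j, ((∫ x, W i x * W j x ∂(designMeasure Cm p))
        - (∫ x, W i x ∂(designMeasure Cm p)) * ∫ x, W j x ∂(designMeasure Cm p))) ≤
      (∑ c : Fin Cm, ((gam ρ cl c κ : ℝ)) ^ 2) * B ^ 2 := by
    have step1 : (∑ i, ∑ j, ((∫ x, W i x * W j x ∂(designMeasure Cm p))
          - (∫ x, W i x ∂(designMeasure Cm p)) * ∫ x, W j x ∂(designMeasure Cm p))) ≤
        ∑ i, ∑ j, (B ^ 2 * ∑ c : Fin Cm,
          (if c ∈ S i then (1:ℝ) else 0) * (if c ∈ S j then (1:ℝ) else 0)) := by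
      refine Finset.sum_le_sum fun i _ => Finset.sum_le_sum fun j _ => ?_
      refine le_trans (hpair i j) ?_
      by_cases h : Disjoint (S i) (S j)
      · rw [if_pos h]
        refine mul_nonneg (sq_nonneg B) (Finset.sum_nonneg fun c _ => ?_)
        exact mul_nonneg (hind _) (hind _)
      · rw [if_neg h]
        obtain ⟨c0, h1, h2⟩ := Finset.not_disjoint_iff.mp h
        have hB2 : (B:ℝ) ^ 2 = B ^ 2 *
            ((if c0 ∈ S i then (1:ℝ) else 0) * (if c0 ∈ S j then (1:ℝ) else 0)) := by
          rw [if_pos h1, if_pos h2]; ring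
        refine le_trans (le_of_eq hB2) (mul_le_mul_of_nonneg_left ?_ (sq_nonneg B))
        exact Finset.single_le_sum
          (f := fun c => (if c ∈ S i then (1:ℝ) else 0) * (if c ∈ S j then (1:ℝ) else 0))
          (fun c _ => mul_nonneg (hind _) (hind _)) (Finset.mem_univ c0)
    have hg : ∀ c : Fin Cm,
        (∑ i : Fin m, (if c ∈ S i then (1:ℝ) else 0)) = (gam ρ cl c κ : ℝ) := by
      intro c
      rw [Finset.sum_boole]
      congr 1
      simp only [gam, hS]
      congr 1
      refine Finset.filter_congr fun i _ => ?_
      simp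
    have step2 : (∑ i, ∑ j, (B ^ 2 * ∑ c : Fin Cm,
          (if c ∈ S i then (1:ℝ) else 0) * (if c ∈ S j then (1:ℝ) else 0))) =
        (∑ c : Fin Cm, ((gam ρ cl c κ : ℝ)) ^ 2) * B ^ 2 := by
      have swap : (∑ c : Fin Cm, ∑ i : Fin m, ∑ j : Fin m,
            (if c ∈ S i then (1:ℝ) else 0) * (if c ∈ S j then (1:ℝ) else 0)) =
          ∑ i : Fin m, ∑ j : Fin m, ∑ c : Fin Cm,
            (if c ∈ S i then (1:ℝ) else 0) * (if c ∈ S j then (1:ℝ) else 0) := by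
        rw [Finset.sum_comm]
        exact Finset.sum_congr rfl fun i _ => Finset.sum_comm
      calc (∑ i, ∑ j, (B ^ 2 * ∑ c : Fin Cm,
            (if c ∈ S i then (1:ℝ) else 0) * (if c ∈ S j then (1:ℝ) else 0))) =
          B ^ 2 * ∑ i, ∑ j, ∑ c : Fin Cm,
            (if c ∈ S i then (1:ℝ) else 0) * (if c ∈ S j then (1:ℝ) else 0) := by
            simp_rw [← Finset.mul_sum]
        _ = B ^ 2 * ∑ c : Fin Cm, ∑ i : Fin m, ∑ j : Fin m,
            (if c ∈ S i then (1:ℝ) else 0) * (if c ∈ S j then (1:ℝ) else 0) := by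
            rw [swap]
        _ = (∑ c : Fin Cm, ((gam ρ cl c κ : ℝ)) ^ 2) * B ^ 2 := by
            rw [mul_comm]
            congr 1
            refine Finset.sum_congr rfl fun c _ => ?_
            rw [← Finset.sum_mul_sum, hg c, pow_two]
    exact le_trans step1 (le_of_eq step2)
  -- put everything together
  rw [horacle, variance_smul, hvar]
  have hfinal : ((m:ℝ)⁻¹) ^ 2 * ((∑ c : Fin Cm, ((gam ρ cl c κ : ℝ)) ^ 2) * B ^ 2) =
      Ybar ^ 2 * (∑ c : Fin Cm, ((gam ρ cl c κ : ℝ)) ^ 2) /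
        ((m : ℝ) ^ 2 * (p * (1 - p)) ^ (2 * Φ)) := by
    have hm0 : (m:ℝ) ≠ 0 := Nat.cast_ne_zero.mpr hm.ne'
    have h2Φ : (p * (1 - p)) ^ (2 * Φ) = ((p * (1 - p)) ^ Φ) ^ 2 := by
      rw [mul_comm 2 Φ, pow_mul]
    rw [hB, h2Φ]
    field_simp
  rw [← hfinal]
  exact mul_le_mul_of_nonneg_left hsum (by positivity)

end AGEPaper
end
end

section
/- Under a cluster-randomized design with parameter p ∈ (0,1) and geometric interference with constants K₁, η, the Horvitz-Thompson estimator θ̂^{HT}_{n,κ} = (1/n)·Σ_i Y_i·( T_{i1}/p^{φ_n(i,κ)} − T_{i0}/(1−p)^{φ_n(i,κ)} ) and the oracle estimator θ̃_{n,κ} = (1/n)·Σ_i [ Y_i(𝟏)·T_{i1}/p^{φ_n(i,κ)} − Y_i(𝟎)·T_{i0}/(1−p)^{φ_n(i,κ)} ] satisfy, almost surely, |θ̃_{n,κ} − θ̂^{HT}_{n,κ}| ≤ 2·K₁·κ^{−η} / (p(1−p))^{φ_n(κ)}. -/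
open MeasureTheory ProbabilityTheory Filter
open scoped ENNReal NNReal BigOperators Classical Topology

noncomputable section

namespace AGEPaper

variable {n C : ℕ}

lemma key_bound {m Cm : ℕ} (hm : 0 < m) (ρ : Fin m → Fin m → ℝ) (hρ : DistOK ρ)
    (cl : Fin m → Fin Cm) (Y : Fin m → (Fin m → Bool) → ℝ)
    (K₁ η : ℝ) (hK₁ : 0 < K₁) (hη : 0 < η) (hGI : GeomInterf ρ K₁ η Y)
    (κ : ℝ) (hκ : 0 < κ) (x : Fin Cm → Bool) (t : Bool) (i : Fin m)
    (h : allTreat ρ cl κ i t x) :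
    |Y i (fun _ => t) - Y i (dvec cl x)| ≤ K₁ * κ ^ (-η) := by
  set d := dvec cl x with hd
  have hb : 0 ≤ K₁ * κ ^ (-η) := mul_nonneg hK₁.le (Real.rpow_nonneg hκ.le _)
  have hii : i ∈ nbhd ρ i κ := by
    simp [nbhd, hρ.1 i, hκ.le]
  have hdi : d i = t := h i hii
  by_cases hconst : ∀ j, d j = t
  · have hdt : d = fun _ => t := funext hconst
    rw [hdt]
    simpa using hb
  · push_neg at hconst
    obtain ⟨j₀, hj₀⟩ := hconst
    have hbdd : BddAbove {s : ℝ | 0 < s ∧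
        ((∀ j ∈ nbhd ρ i s, d j = true) ∨ (∀ j ∈ nbhd ρ i s, d j = false))} := by
      refine ⟨Finset.univ.sup' ⟨i, Finset.mem_univ i⟩ (fun j => ρ i j), ?_⟩
      rintro s ⟨hs, hcond⟩
      by_contra hgt
      push_neg at hgt
      have hmem : ∀ j : Fin m, j ∈ nbhd ρ i s := by
        intro j
        simp only [nbhd, Finset.mem_filter, Finset.mem_univ, true_and]
        exact le_of_lt (lt_of_le_of_lt
          (Finset.le_sup' (fun j => ρ i j) (Finset.mem_univ j)) hgt)
      cases hcond with
      | inl hall =>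
          have ht : t = true := hdi.symm.trans (hall i (hmem i))
          exact hj₀ ((hall j₀ (hmem j₀)).trans ht.symm)
      | inr hall =>
          have ht : t = false := hdi.symm.trans (hall i (hmem i))
          exact hj₀ ((hall j₀ (hmem j₀)).trans ht.symm)
    have hκmem : κ ∈ {s : ℝ | 0 < s ∧
        ((∀ j ∈ nbhd ρ i s, d j = true) ∨ (∀ j ∈ nbhd ρ i s, d j = false))} := by
      refine ⟨hκ, ?_⟩
      cases t with
      | true => exact Or.inl (fun j hj => h j hj)
      | false => exact Or.inr (fun j hj => h j hj)
    have hst : κ ≤ stilde ρ d i := le_csSup hbdd hκmem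
    have hrp : stilde ρ d i ^ (-η) ≤ κ ^ (-η) := by
      rw [Real.rpow_neg hκ.le, Real.rpow_neg (hκ.trans_le hst).le]
      exact inv_anti₀ (Real.rpow_pos_of_pos hκ _)
        (Real.rpow_le_rpow hκ.le hst hη.le)
    have hgi := hGI i d
    rw [hdi] at hgi
    have heq : (if t = true then Y i (fun _ => true) else Y i (fun _ => false))
        = Y i (fun _ => t) := by cases t <;> simp
    calc |Y i (fun _ => t) - Y i d| = |Y i d - Y i (fun _ => t)| := abs_sub_comm _ _
      _ ≤ K₁ * stilde ρ d i ^ (-η) := by rw [← heq]; exact hgi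
      _ ≤ K₁ * κ ^ (-η) := mul_le_mul_of_nonneg_left hrp hK₁.le

/-- the oracle and Horvitz–Thompson estimators are almost surely within
`2K₁κ^{-η}/(p(1-p))^{φ_n(κ)}` of each other under geometric interference. -/
theorem oracle_ht_close
    (m Cm : ℕ) (hm : 0 < m)
    (ρ : Fin m → Fin m → ℝ) (hρ : DistOK ρ)
    (cl : Fin m → Fin Cm)
    (Y : Fin m → (Fin m → Bool) → ℝ)
    (K₁ η : ℝ) (hK₁ : 0 < K₁) (hη : 0 < η)
    (hGI : GeomInterf ρ K₁ η Y)
    (p κ : ℝ) (hp0 : 0 < p) (hp1 : p < 1) (hκ : 0 < κ) :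
    ∀ᵐ x ∂ designMeasure Cm p,
      |oracle ρ cl p κ Y x - htEstP ρ cl p κ Y x| ≤
        2 * K₁ * κ ^ (-η) / (p * (1 - p)) ^ phiMax ρ cl κ := by
  refine Filter.Eventually.of_forall fun x => ?_
  have hq : 0 < 1 - p := by linarith
  have hb : 0 ≤ K₁ * κ ^ (-η) := mul_nonneg hK₁.le (Real.rpow_nonneg hκ.le _)
  set φM := phiMax ρ cl κ with hφM
  have hpqpos : 0 < (p * (1 - p)) ^ φM := pow_pos (mul_pos hp0 hq) _
  have hterm : ∀ i : Fin m,
      |(Y i (fun _ => true) * Tind ρ cl κ i true x / p ^ phi ρ cl i κ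
          - Y i (fun _ => false) * Tind ρ cl κ i false x / (1 - p) ^ phi ρ cl i κ)
        - Y i (dvec cl x) * (Tind ρ cl κ i true x / p ^ phi ρ cl i κ
          - Tind ρ cl κ i false x / (1 - p) ^ phi ρ cl i κ)|
        ≤ 2 * K₁ * κ ^ (-η) / (p * (1 - p)) ^ φM := by
    intro i
    have hpφ : 0 < p ^ phi ρ cl i κ := pow_pos hp0 _
    have hqφ : 0 < (1 - p) ^ phi ρ cl i κ := pow_pos hq _
    have hφle : phi ρ cl i κ ≤ φM :=
      Finset.le_sup (f := fun i => phi ρ cl i κ) (Finset.mem_univ i)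
    have hden1 : (p * (1 - p)) ^ φM ≤ p ^ phi ρ cl i κ := by
      calc (p * (1 - p)) ^ φM = p ^ φM * (1 - p) ^ φM := mul_pow _ _ _
        _ ≤ p ^ φM * 1 := by
            exact mul_le_mul_of_nonneg_left
              (pow_le_one₀ hq.le (by linarith)) (pow_pos hp0 _).le
        _ = p ^ φM := mul_one _
        _ ≤ p ^ phi ρ cl i κ := pow_le_pow_of_le_one hp0.le hp1.le hφle
    have hden0 : (p * (1 - p)) ^ φM ≤ (1 - p) ^ phi ρ cl i κ := by
      calc (p * (1 - p)) ^ φM = p ^ φM * (1 - p) ^ φM := mul_pow _ _ _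
        _ ≤ 1 * (1 - p) ^ φM := by
            exact mul_le_mul_of_nonneg_right
              (pow_le_one₀ hp0.le hp1.le) (pow_pos hq _).le
        _ = (1 - p) ^ φM := one_mul _
        _ ≤ (1 - p) ^ phi ρ cl i κ :=
            pow_le_pow_of_le_one hq.le (by linarith) hφle
    have h1 : |(Y i (fun _ => true) - Y i (dvec cl x)) * Tind ρ cl κ i true x|
        ≤ K₁ * κ ^ (-η) := by
      unfold Tind
      split
      · rw [mul_one]
        exact key_bound hm ρ hρ cl Y K₁ η hK₁ hη hGI κ hκ x true i (by assumption)
      · simpa using hb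
    have h0 : |(Y i (fun _ => false) - Y i (dvec cl x)) * Tind ρ cl κ i false x|
        ≤ K₁ * κ ^ (-η) := by
      unfold Tind
      split
      · rw [mul_one]
        exact key_bound hm ρ hρ cl Y K₁ η hK₁ hη hGI κ hκ x false i (by assumption)
      · simpa using hb
    have hrw : (Y i (fun _ => true) * Tind ρ cl κ i true x / p ^ phi ρ cl i κ
          - Y i (fun _ => false) * Tind ρ cl κ i false x / (1 - p) ^ phi ρ cl i κ)
        - Y i (dvec cl x) * (Tind ρ cl κ i true x / p ^ phi ρ cl i κ
          - Tind ρ cl κ i false x / (1 - p) ^ phi ρ cl i κ)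
        = (Y i (fun _ => true) - Y i (dvec cl x)) * Tind ρ cl κ i true x / p ^ phi ρ cl i κ
          - (Y i (fun _ => false) - Y i (dvec cl x)) * Tind ρ cl κ i false x
              / (1 - p) ^ phi ρ cl i κ := by ring
    rw [hrw]
    calc |(Y i (fun _ => true) - Y i (dvec cl x)) * Tind ρ cl κ i true x / p ^ phi ρ cl i κ
          - (Y i (fun _ => false) - Y i (dvec cl x)) * Tind ρ cl κ i false x
              / (1 - p) ^ phi ρ cl i κ|
        ≤ |(Y i (fun _ => true) - Y i (dvec cl x)) * Tind ρ cl κ i true x / p ^ phi ρ cl i κ|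
          + |(Y i (fun _ => false) - Y i (dvec cl x)) * Tind ρ cl κ i false x
              / (1 - p) ^ phi ρ cl i κ| := abs_sub _ _
      _ = |(Y i (fun _ => true) - Y i (dvec cl x)) * Tind ρ cl κ i true x| / p ^ phi ρ cl i κ
          + |(Y i (fun _ => false) - Y i (dvec cl x)) * Tind ρ cl κ i false x|
              / (1 - p) ^ phi ρ cl i κ := by
            rw [abs_div, abs_div, abs_of_pos hpφ, abs_of_pos hqφ]
      _ ≤ K₁ * κ ^ (-η) / (p * (1 - p)) ^ φM + K₁ * κ ^ (-η) / (p * (1 - p)) ^ φM :=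
            add_le_add (div_le_div₀ hb h1 hpqpos hden1) (div_le_div₀ hb h0 hpqpos hden0)
      _ = 2 * K₁ * κ ^ (-η) / (p * (1 - p)) ^ φM := by ring
  have hmpos : (0 : ℝ) < (m : ℝ) := Nat.cast_pos.mpr hm
  unfold oracle htEstP
  rw [div_sub_div_same, ← Finset.sum_sub_distrib, abs_div,
    abs_of_pos hmpos, div_le_iff₀ hmpos]
  calc |∑ i, ((Y i (fun _ => true) * Tind ρ cl κ i true x / p ^ phi ρ cl i κ
          - Y i (fun _ => false) * Tind ρ cl κ i false x / (1 - p) ^ phi ρ cl i κ)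
        - Y i (dvec cl x) * (Tind ρ cl κ i true x / p ^ phi ρ cl i κ
          - Tind ρ cl κ i false x / (1 - p) ^ phi ρ cl i κ))|
      ≤ ∑ i, |(Y i (fun _ => true) * Tind ρ cl κ i true x / p ^ phi ρ cl i κ
          - Y i (fun _ => false) * Tind ρ cl κ i false x / (1 - p) ^ phi ρ cl i κ)
        - Y i (dvec cl x) * (Tind ρ cl κ i true x / p ^ phi ρ cl i κ
          - Tind ρ cl κ i false x / (1 - p) ^ phi ρ cl i κ)| :=
        Finset.abs_sum_le_sum_abs _ _
    _ ≤ ∑ _i : Fin m, 2 * K₁ * κ ^ (-η) / (p * (1 - p)) ^ φM :=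
        Finset.sum_le_sum fun i _ => hterm i
    _ = m * (2 * K₁ * κ ^ (-η) / (p * (1 - p)) ^ φM) := by
        rw [Finset.sum_const, Finset.card_univ, Fintype.card_fin, nsmul_eq_mul]
    _ = 2 * K₁ * κ ^ (-η) / (p * (1 - p)) ^ φM * m := mul_comm _ _

end AGEPaper
end
end
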